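/- arXiv:1505.04075 — 5 statements merged into one kernel-verified Lean document; each statement's English description precedes it below -/
import Mathlib

section
/- T(n,k) = 0 whenever k > 1 + floor(n²/4), where T(n,k) is the number of Dyck paths of semi-length n with (sum of peak heights) minus (number of peaks) equal to k. -/
attribute [local instance] Classical.propDecidable

/-- The set of Dyck paths of semi-length `n`, encoded as the set `U ⊆ {0, …, 2n-1}` of
positions of up-steps, such that there are `n` up-steps and every prefix has at least
as many up-steps as down-steps. -/
noncomputable def dyckPaths (n : ℕ) : Finset (Finset ℕ) :=
  (Finset.range (2 * n)).powerset.filter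
    (fun U => U.card = n ∧ ∀ t ∈ Finset.range (2 * n + 1), t ≤ 2 * (U ∩ Finset.range t).card)

/-- The set of positions `i` at which the Dyck path (with up-step set `U`) has a peak:
an up-step at `i` immediately followed by a down-step at `i+1`. -/
def peakSet (n : ℕ) (U : Finset ℕ) : Finset ℕ :=
  (Finset.range (2 * n)).filter (fun i => i ∈ U ∧ i + 1 ∉ U ∧ i + 1 < 2 * n)

/-- The height of the peak at position `i`: the y-coordinate after the up-step at `i`. -/
def peakHeight (U : Finset ℕ) (i : ℕ) : ℕ :=
  2 * (U ∩ Finset.range (i + 1)).card - (i + 1)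

/-- The statistic (sum of peak heights) − (number of peaks) of a Dyck path. -/
def statDiff (n : ℕ) (U : Finset ℕ) : ℕ :=
  (∑ i ∈ peakSet n U, peakHeight U i) - (peakSet n U).card

/-- `T n k` is the number of Dyck paths of semi-length `n` with
(sum of peak heights) − (number of peaks) equal to `k`. -/
noncomputable def T (n k : ℕ) : ℕ :=
  ((dyckPaths n).filter (fun U => statDiff n U = k)).card

lemma peak_key (n : ℕ) (U : Finset ℕ) (hU : U ∈ dyckPaths n) (q : ℕ)
    (hq : q ∈ peakSet n U) : peakHeight U q + (peakSet n U).card ≤ n + 1 := by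
  simp only [dyckPaths, Finset.mem_filter, Finset.mem_powerset] at hU
  obtain ⟨hsub, hcard, hdyck⟩ := hU
  simp only [peakSet, Finset.mem_filter, Finset.mem_range] at hq
  obtain ⟨hq2n, hqU, hq1U, hq1lt⟩ := hq
  set A := (U ∩ Finset.range (q + 1)).card with hA
  have hins : U ∩ Finset.range (q + 1) = insert q (U ∩ Finset.range q) := by
    ext x
    simp only [Finset.mem_inter, Finset.mem_range, Finset.mem_insert, Nat.lt_succ_iff]
    constructor
    · rintro ⟨hx1, hx2⟩
      rcases Nat.lt_or_ge x q with h | h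
      · exact Or.inr ⟨hx1, h⟩
      · exact Or.inl (le_antisymm hx2 h)
    · rintro (rfl | ⟨hx1, hx2⟩)
      · exact ⟨hqU, le_rfl⟩
      · exact ⟨hx1, le_of_lt hx2⟩
  have hAcard : A = (U ∩ Finset.range q).card + 1 := by
    rw [hA, hins, Finset.card_insert_of_notMem]
    simp [Finset.mem_inter]
  have hdq : q ≤ 2 * (U ∩ Finset.range q).card :=
    hdyck q (by simp only [Finset.mem_range]; omega)
  have h1 : q + 2 ≤ 2 * A := by omega
  have hAn : A ≤ n := hcard ▸ Finset.card_le_card Finset.inter_subset_left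
  -- peaks before q
  have hbefore : ((peakSet n U).filter (fun j => j < q)).card + A ≤ q + 1 := by
    have hmap : ((peakSet n U).filter (fun j => j < q)).card ≤
        (Finset.range (q + 1) \ U).card := by
      apply Finset.card_le_card_of_injOn (fun j => j + 1)
      · intro j hj
        simp only [peakSet, Finset.mem_coe, Finset.mem_filter, Finset.mem_range] at hj
        obtain ⟨⟨_, _, hjn, _⟩, hjq⟩ := hj
        simp only [Finset.mem_coe, Finset.mem_sdiff, Finset.mem_range]
        exact ⟨show j + 1 < q + 1 by omega, hjn⟩
      · intro a _ b _ hab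
        simpa using hab
    have hsplit : (Finset.range (q + 1) ∩ U).card + (Finset.range (q + 1) \ U).card
        = q + 1 := by
      rw [Finset.card_inter_add_card_sdiff, Finset.card_range]
    have hcomm : (Finset.range (q + 1) ∩ U).card = A := by
      rw [Finset.inter_comm]
    omega
  -- peaks after q
  have hafter : ((peakSet n U).filter (fun j => q < j)).card + A ≤ n := by
    have hsub2 : ((peakSet n U).filter (fun j => q < j)) ⊆ U \ Finset.range (q + 1) := by
      intro j hj
      simp only [peakSet, Finset.mem_filter, Finset.mem_range] at hj
      simp only [Finset.mem_sdiff, Finset.mem_range]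
      exact ⟨hj.1.2.1, by omega⟩
    have h2 := Finset.card_le_card hsub2
    have h3 : (U ∩ Finset.range (q + 1)).card + (U \ Finset.range (q + 1)).card = n := by
      rw [Finset.card_inter_add_card_sdiff]; exact hcard
    omega
  -- split the peak set
  have hp : (peakSet n U).card ≤ ((peakSet n U).filter (fun j => j < q)).card +
      ((peakSet n U).filter (fun j => q < j)).card + 1 := by
    have hsplit := Finset.card_filter_add_card_filter_not
      (s := peakSet n U) (p := fun j => j < q)
    have hsub3 : (peakSet n U).filter (fun j => ¬ j < q) ⊆
        insert q ((peakSet n U).filter (fun j => q < j)) := by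
      intro j hj
      simp only [Finset.mem_filter, not_lt] at hj
      rcases eq_or_lt_of_le hj.2 with hh | hh
      · simp [← hh]
      · simp only [Finset.mem_insert, Finset.mem_filter]
        exact Or.inr ⟨hj.1, hh⟩
    have h4 := Finset.card_le_card hsub3
    have h5 := Finset.card_insert_le q ((peakSet n U).filter (fun j => q < j))
    omega
  have hh : peakHeight U q = 2 * A - (q + 1) := rfl
  omega

/-- `T n k = 0` whenever `k > 1 + ⌊n²/4⌋`. -/
theorem T_eq_zero (n k : ℕ) (h : 1 + n ^ 2 / 4 < k) : T n k = 0 := by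
  rw [T, Finset.card_eq_zero, Finset.filter_eq_empty_iff]
  intro U hU hstat
  have hcard : U.card = n := by
    simp only [dyckPaths, Finset.mem_filter, Finset.mem_powerset] at hU
    exact hU.2.1
  set p := (peakSet n U).card with hp
  have hple : p ≤ n := by
    have hsub : peakSet n U ⊆ U := by
      intro i hi
      simp only [peakSet, Finset.mem_filter] at hi
      exact hi.2.1
    have := Finset.card_le_card hsub
    omega
  have hsum : ∑ i ∈ peakSet n U, peakHeight U i ≤ p * (n + 1 - p) := by
    calc ∑ i ∈ peakSet n U, peakHeight U i ≤ ∑ _i ∈ peakSet n U, (n + 1 - p) := by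
          apply Finset.sum_le_sum
          intro i hi
          have := peak_key n U hU i hi
          omega
      _ = p * (n + 1 - p) := by rw [Finset.sum_const, smul_eq_mul]
  have hq4 : p * (n - p) ≤ n ^ 2 / 4 := by
    rw [Nat.le_div_iff_mul_le (by norm_num)]
    obtain ⟨m, hm⟩ := Nat.le.dest hple
    have hnp : n - p = m := by omega
    rw [hnp, ← hm]
    nlinarith [two_mul_le_add_sq p m]
  have hmul : p * (n + 1 - p) = p * (n - p) + p := by
    have : n + 1 - p = (n - p) + 1 := by omega
    rw [this, Nat.mul_succ]
  have hbound : statDiff n U ≤ n ^ 2 / 4 := by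
    rw [statDiff]
    omega
  omega
end

section
/- Let w = T_{i_1}^{m_1} T_{i_2}^{m_2} ⋯ T_{i_ℓ}^{m_ℓ} be a concatenation of segment words with i_j ≤ m_j for all j, m_1 < m_2 < ⋯ < m_ℓ, and i_1 < i_2 < ⋯ < i_ℓ. Then w is a homogeneous word. -/
/-- `a` and `b` are neighbors in the type `A` Dynkin diagram, i.e. `|a - b| = 1`. -/
def Nbr (a b : ℕ) : Prop := a + 1 = b ∨ b + 1 = a

/-- A word `w` over the alphabet `{1, …, n}` is homogeneous: whenever two equal letters
occur at positions `r < s`, there exist positions `t, u` with `r < t < u < s` whose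
letters are both neighbors of the repeated letter. -/
def Homog (w : List ℕ) : Prop :=
  ∀ r s : ℕ, r < s → s < w.length → w.getD r 0 = w.getD s 0 →
    ∃ t u : ℕ, r < t ∧ t < u ∧ u < s ∧
      Nbr (w.getD t 0) (w.getD r 0) ∧ Nbr (w.getD u 0) (w.getD r 0)

/-- The decreasing segment word `T_i^j = [j, j-1, …, i+1, i]` (empty when `i > j`). -/
def segWord (i j : ℕ) : List ℕ :=
  (List.range' i (j + 1 - i)).reverse

lemma segWord_length (i j : ℕ) : (segWord i j).length = j + 1 - i := by
  simp [segWord]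

lemma segWord_getD (i j o : ℕ) (h : o < j + 1 - i) :
    (segWord i j).getD o 0 = j - o := by
  have hlen : o < (segWord i j).length := by rw [segWord_length]; exact h
  rw [List.getD_eq_getElem _ _ hlen]
  simp only [segWord, List.getElem_reverse, List.getElem_range']
  simp [List.length_range']
  omega

/-- Word builder: flatten of the segment words of `ps`. -/
def W (ps : List (ℕ × ℕ)) : List ℕ :=
  (ps.map (fun p => segWord p.1 p.2)).flatten

lemma W_cons (p : ℕ × ℕ) (t : List (ℕ × ℕ)) : W (p :: t) = segWord p.1 p.2 ++ W t := by
  simp [W]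

lemma W_append (a b : List (ℕ × ℕ)) : W (a ++ b) = W a ++ W b := by
  simp [W]

lemma W_split (A B : List (ℕ × ℕ)) (p : ℕ × ℕ) :
    W (A ++ p :: B) = W A ++ (segWord p.1 p.2 ++ W B) := by
  rw [W_append, W_cons]

lemma W_decomp (ps : List (ℕ × ℕ)) (r : ℕ) (h : r < (W ps).length) :
    ∃ A p B, ps = A ++ p :: B ∧ (W A).length ≤ r ∧
      r < (W A).length + (segWord p.1 p.2).length := by
  induction ps generalizing r with
  | nil => simp [W] at h
  | cons p t ih =>
    by_cases hc : r < (segWord p.1 p.2).length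
    · exact ⟨[], p, t, rfl, by simp [W], by simp [W]; omega⟩
    · push_neg at hc
      have hlen : (W (p :: t)).length = (segWord p.1 p.2).length + (W t).length := by
        rw [W_cons]; simp
      have h' : r - (segWord p.1 p.2).length < (W t).length := by omega
      obtain ⟨A, q, B, h1, h2, h3⟩ := ih _ h'
      refine ⟨p :: A, q, B, by rw [h1]; rfl, ?_, ?_⟩ <;>
        · have : (W (p :: A)).length = (segWord p.1 p.2).length + (W A).length := by
            rw [W_cons]; simp
          omega

lemma W_getD (A B : List (ℕ × ℕ)) (p : ℕ × ℕ) (o : ℕ)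
    (h : o < (segWord p.1 p.2).length) :
    (W (A ++ p :: B)).getD ((W A).length + o) 0 = (segWord p.1 p.2).getD o 0 := by
  rw [W_split, List.getD_append_right _ _ _ _ (Nat.le_add_right _ o),
    Nat.add_sub_cancel_left, List.getD_append _ _ _ _ h]

/-- A concatenation `T_{i_1}^{m_1} T_{i_2}^{m_2} ⋯ T_{i_ℓ}^{m_ℓ}` of segment words with
`i_j ≤ m_j` for all `j`, `i_1 < i_2 < ⋯ < i_ℓ` and `m_1 < m_2 < ⋯ < m_ℓ`
is a homogeneous word. -/
theorem canonical_word_homog (ps : List (ℕ × ℕ))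
    (hle : ∀ p ∈ ps, p.1 ≤ p.2)
    (hchain : List.Chain' (fun p q => p.1 < q.1 ∧ p.2 < q.2) ps) :
    Homog ((ps.map (fun p => segWord p.1 p.2)).flatten) := by
  show Homog (W ps)
  haveI : IsTrans (ℕ × ℕ) (fun p q : ℕ × ℕ => p.1 < q.1 ∧ p.2 < q.2) :=
    ⟨fun a b c h1 h2 => ⟨h1.1.trans h2.1, h1.2.trans h2.2⟩⟩
  have hpw : ps.Pairwise (fun p q => p.1 < q.1 ∧ p.2 < q.2) :=
    List.isChain_iff_pairwise.mp hchain
  intro r s hrs hs hval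
  have hr : r < (W ps).length := lt_trans hrs hs
  obtain ⟨A, p, B, hAB, h1, h2⟩ := W_decomp ps r hr
  set nA := (W A).length with hnA
  set lp := (segWord p.1 p.2).length with hlp
  have hplen : lp = p.2 + 1 - p.1 := segWord_length p.1 p.2
  have hpmem : p ∈ ps := by rw [hAB]; simp
  have hple : p.1 ≤ p.2 := hle p hpmem
  have ho1 : r - nA < lp := by omega
  have hvr : (W ps).getD r 0 = p.2 - (r - nA) := by
    have h := W_getD A B p (r - nA) ho1
    rw [show nA + (r - nA) = r by omega] at h
    rw [hAB, h, segWord_getD _ _ _ (by omega)]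
  by_cases hcase : s < nA + lp
  · -- s in the same segment: contradiction
    exfalso
    have ho2 : s - nA < lp := by omega
    have hvs : (W ps).getD s 0 = p.2 - (s - nA) := by
      have h := W_getD A B p (s - nA) ho2
      rw [show nA + (s - nA) = s by omega] at h
      rw [hAB, h, segWord_getD _ _ _ (by omega)]
    rw [hvr, hvs] at hval
    omega
  · push_neg at hcase
    have hlenps : (W ps).length = nA + lp + (W B).length := by
      rw [hAB, W_split]
      simp only [List.length_append]
      omega
    have hs' : s - (nA + lp) < (W B).length := by omega
    obtain ⟨C, q, D, hCD, h3, h4⟩ := W_decomp B _ hs'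
    set nC := (W C).length with hnC
    set lq := (segWord q.1 q.2).length with hlq
    have hqlen : lq = q.2 + 1 - q.1 := segWord_length q.1 q.2
    have hps2 : ps = (A ++ p :: C) ++ q :: D := by rw [hAB, hCD]; simp
    have hqmem : q ∈ ps := by rw [hps2]; simp
    have hqle : q.1 ≤ q.2 := hle q hqmem
    have hsub : [p, q].Sublist ps := by
      rw [hAB, hCD]
      refine List.Sublist.trans ?_ (List.sublist_append_right A _)
      exact List.Sublist.cons₂ p (List.singleton_sublist.mpr (by simp))
    have hpq : p.1 < q.1 ∧ p.2 < q.2 := by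
      have := hpw.sublist hsub
      simpa using this
    have hnAC : (W (A ++ p :: C)).length = nA + lp + nC := by
      rw [W_split]
      simp only [List.length_append]
      omega
    set o2 := s - (nA + lp) - nC with ho2def
    have ho2 : o2 < lq := by omega
    have hseq : s = nA + lp + nC + o2 := by omega
    have hvs : (W ps).getD s 0 = q.2 - o2 := by
      have h := W_getD (A ++ p :: C) D q o2 ho2
      rw [hnAC, show nA + lp + nC + o2 = s by omega] at h
      rw [hps2, h, segWord_getD _ _ _ (by omega)]
    set a := (W ps).getD r 0 with ha
    have hva : a = p.2 - (r - nA) := hvr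
    have hva' : a = q.2 - o2 := hval.trans hvs
    have haq : q.1 ≤ a := by omega
    have hap : a ≤ p.2 := by omega
    have ha1 : p.1 < a := by omega
    have halt : a < q.2 := by omega
    have ho2pos : 1 ≤ o2 := by omega
    have ho1' : r - nA + 1 < lp := by omega
    refine ⟨r + 1, s - 1, by omega, by omega, by omega, ?_, ?_⟩
    · have hvt : (W ps).getD (r + 1) 0 = p.2 - (r - nA + 1) := by
        have h := W_getD A B p (r - nA + 1) ho1'
        rw [show nA + (r - nA + 1) = r + 1 by omega] at h
        rw [hAB, h, segWord_getD _ _ _ (by omega)]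
      rw [hvt]
      exact Or.inl (by omega)
    · have hvu : (W ps).getD (s - 1) 0 = q.2 - (o2 - 1) := by
        have h := W_getD (A ++ p :: C) D q (o2 - 1) (by omega)
        rw [hnAC, show nA + lp + nC + (o2 - 1) = s - 1 by omega] at h
        rw [hps2, h, segWord_getD _ _ _ (by omega)]
      rw [hvu]
      exact Or.inr (by omega)
end

section
/- If w = T_{i_1}^{m_1} ⋯ T_{i_ℓ}^{m_ℓ} is the canonical form of a fully commutative element of S_{n+1} (with i_j ≤ m_j, i_1 < ⋯ < i_ℓ, m_1 < ⋯ < m_ℓ), then the Coxeter length of w equals ℓ + Σ_{j=1}^{ℓ} (m_j − i_j), i.e., the expression T_{i_1}^{m_1} ⋯ T_{i_ℓ}^{m_ℓ} is a reduced word. -/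
/-- The `i`-th simple transposition `sₙ i = (i-1, i)` in the symmetric group `S_{n+1}`
on `{0, …, n}`, for `1 ≤ i ≤ n` (and the identity otherwise).  In the usual
`1`-based labelling this is the simple transposition `s_i` swapping `i` and `i+1`. -/
def sgen (n : ℕ) (i : ℕ) : Equiv.Perm (Fin (n + 1)) :=
  if h : 0 < i ∧ i ≤ n then Equiv.swap ⟨i - 1, by omega⟩ ⟨i, by omega⟩ else 1

/-- The segment `T_i^j = s_j s_{j-1} ⋯ s_{i+1} s_i` (the identity when `i > j`). -/
def seg (n i j : ℕ) : Equiv.Perm (Fin (n + 1)) :=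
  ((List.range' i (j + 1 - i)).reverse.map (sgen n)).prod

/-- The product of the word `l` of simple transpositions in `S_{n+1}`. -/
def wprod (n : ℕ) (l : List ℕ) : Equiv.Perm (Fin (n + 1)) :=
  (l.map (sgen n)).prod

/-- `l` is a reduced word for `w`: a word in the letters `1, …, n` of minimal length
whose product of simple transpositions is `w`. -/
def IsReducedWord (n : ℕ) (w : Equiv.Perm (Fin (n + 1))) (l : List ℕ) : Prop :=
  (∀ i ∈ l, 1 ≤ i ∧ i ≤ n) ∧ wprod n l = w ∧
    ∀ l' : List ℕ, (∀ i ∈ l', 1 ≤ i ∧ i ≤ n) → wprod n l' = w → l.length ≤ l'.length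

/-- `w` is fully commutative: no reduced word for `w` contains a factor `[i, i', i]`
with `|i - i'| = 1`. -/
def FullyCommutative (n : ℕ) (w : Equiv.Perm (Fin (n + 1))) : Prop :=
  ∀ l : List ℕ, IsReducedWord n w l →
    ∀ i i' : ℕ, (i + 1 = i' ∨ i' + 1 = i) → ¬ ([i, i', i] <:+: l)

namespace CanonAux

variable {n : ℕ}

def invSet (n : ℕ) (w : Equiv.Perm (Fin (n+1))) : Finset (Fin (n+1) × Fin (n+1)) :=
  Finset.univ.filter fun p => p.1 < p.2 ∧ w p.2 < w p.1

def invNum (n : ℕ) (w : Equiv.Perm (Fin (n+1))) : ℕ := (invSet n w).card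

lemma invNum_one : invNum n 1 = 0 := by
  rw [invNum, Finset.card_eq_zero, invSet, Finset.filter_eq_empty_iff]
  rintro p - ⟨hlt1, hlt2⟩
  simp only [Equiv.Perm.one_apply] at hlt2
  exact absurd hlt1 (not_lt.2 hlt2.le)

lemma swap_lt_iff {b c : Fin (n+1)} (h : (b:ℕ) + 1 = (c:ℕ)) {x y : Fin (n+1)}
    (h1 : ¬(x = b ∧ y = c)) (h2 : ¬(x = c ∧ y = b)) :
    Equiv.swap b c x < Equiv.swap b c y ↔ x < y := by
  rw [Equiv.swap_apply_def, Equiv.swap_apply_def]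
  split_ifs <;> (simp only [Fin.lt_def, Fin.ext_iff] at * <;> omega)

lemma invNum_mul_swap {b c : Fin (n+1)} (h : (b:ℕ) + 1 = (c:ℕ))
    (u : Equiv.Perm (Fin (n+1))) (hbc : u b < u c) :
    invNum n (u * Equiv.swap b c) = invNum n u + 1 := by
  classical
  set s := Equiv.swap b c with hs
  have hblt : b < c := by rw [Fin.lt_def]; omega
  have himg : invSet n (u * s) = insert (b, c) ((invSet n u).image fun p => (s p.1, s p.2)) := by
    ext p
    simp only [invSet, Finset.mem_insert, Finset.mem_image, Finset.mem_filter,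
      Finset.mem_univ, true_and]
    simp only [Equiv.Perm.mul_apply]
    constructor
    · rintro ⟨hlt, hinv⟩
      by_cases hp : p = (b, c)
      · exact Or.inl hp
      · have hne1 : ¬(p.1 = b ∧ p.2 = c) := by
          intro hx; exact hp (Prod.ext hx.1 hx.2)
        have hne2 : ¬(p.1 = c ∧ p.2 = b) := by
          rintro ⟨e1, e2⟩; rw [e1, e2] at hlt; exact absurd hblt (not_lt.2 hlt.le)
        refine Or.inr ⟨(s p.1, s p.2), ⟨?_, ?_⟩, ?_⟩
        · exact (swap_lt_iff h hne1 hne2).2 hlt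
        · simpa [hs, Equiv.swap_apply_self] using hinv
        · simp [hs, Equiv.swap_apply_self]
    · rintro (rfl | ⟨q, ⟨hq1, hq2⟩, rfl⟩)
      · refine ⟨hblt, ?_⟩
        simpa [hs, Equiv.swap_apply_left, Equiv.swap_apply_right] using hbc
      · have hne1 : ¬(q.1 = b ∧ q.2 = c) := by
          rintro ⟨e1, e2⟩; rw [e1, e2] at hq2; exact absurd hq2 (not_lt.2 hbc.le)
        have hne2 : ¬(q.1 = c ∧ q.2 = b) := by
          rintro ⟨e1, e2⟩; rw [e1, e2] at hq1; exact absurd hblt (not_lt.2 hq1.le)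
        refine ⟨(swap_lt_iff h hne1 hne2).2 hq1, ?_⟩
        simpa [hs, Equiv.swap_apply_self] using hq2
  have hnot : (b, c) ∉ (invSet n u).image fun p => (s p.1, s p.2) := by
    rintro hmem
    obtain ⟨q, hq, he⟩ := Finset.mem_image.1 hmem
    have e1 : q.1 = c := by
      have := congrArg Prod.fst he
      simp only at this
      have : s q.1 = b := this
      have := congrArg s this
      simpa [hs, Equiv.swap_apply_self, Equiv.swap_apply_left] using this
    have e2 : q.2 = b := by
      have := congrArg Prod.snd he
      simp only at this
      have : s q.2 = c := this
      have := congrArg s this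
      simpa [hs, Equiv.swap_apply_self, Equiv.swap_apply_right] using this
    have hq1 : q.1 < q.2 := (Finset.mem_filter.1 hq).2.1
    rw [e1, e2] at hq1
    exact absurd hblt (not_lt.2 hq1.le)
  have hinj : Function.Injective fun p : Fin (n+1) × Fin (n+1) => (s p.1, s p.2) := by
    intro p q hpq
    have h1 := congrArg Prod.fst hpq
    have h2 := congrArg Prod.snd hpq
    simp only at h1 h2
    exact Prod.ext (s.injective h1) (s.injective h2)
  rw [invNum, himg, Finset.card_insert_of_notMem hnot,
    Finset.card_image_of_injective _ hinj, invNum]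

lemma sgen_apply {i : ℕ} (h1 : 1 ≤ i) (h2 : i ≤ n) (x : Fin (n+1)) :
    (sgen n i x : ℕ) = if (x:ℕ) = i - 1 then i else if (x:ℕ) = i then i - 1 else x := by
  unfold sgen
  rw [dif_pos ⟨h1, h2⟩, Equiv.swap_apply_def]
  split_ifs <;> first
    | omega
    | (simp only [Fin.ext_iff] at *; try omega)

lemma segWord_eq {i m : ℕ} (h : i ≤ m) : segWord i m = segWord (i+1) m ++ [i] := by
  unfold segWord
  have e1 : m + 1 - i = (m - i) + 1 := by omega
  have e2 : m + 1 - (i + 1) = m - i := by omega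
  rw [e1, e2, List.range'_succ, List.reverse_cons]

lemma seg_eq_wprod (i m : ℕ) : seg n i m = wprod n (segWord i m) := rfl

lemma seg_decomp {i m : ℕ} (h : i ≤ m) : seg n i m = seg n (i+1) m * sgen n i := by
  rw [seg_eq_wprod, segWord_eq h]
  unfold wprod
  rw [List.map_append, List.prod_append]
  simp [seg_eq_wprod, wprod]

lemma seg_self (i : ℕ) : seg n i i = sgen n i := by
  unfold seg
  have e1 : i + 1 - i = 1 := by omega
  rw [e1, List.range'_one]
  simp

lemma seg_apply {i m : ℕ} (h1 : 1 ≤ i) (h2 : i ≤ m) (h3 : m ≤ n) (x : Fin (n+1)) :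
    (seg n i m x : ℕ) =
      if (x:ℕ) = i - 1 then m
      else if i ≤ (x:ℕ) ∧ (x:ℕ) ≤ m then (x:ℕ) - 1 else (x:ℕ) := by
  obtain ⟨d, hd⟩ : ∃ d, m - i = d := ⟨_, rfl⟩
  induction d generalizing i x with
  | zero =>
    have him : i = m := by omega
    subst him
    rw [seg_self, sgen_apply h1 (by omega)]
    have := x.isLt
    split_ifs <;> omega
  | succ d ih =>
    have hlt : i < m := by omega
    have hx := x.isLt
    rw [seg_decomp (by omega : i ≤ m), Equiv.Perm.mul_apply,
      ih (by omega) (by omega) (sgen n i x) (by omega)]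
    have hg := sgen_apply h1 (by omega : i ≤ n) x
    rw [hg]
    split_ifs <;> omega

set_option maxHeartbeats 1000000 in
lemma invNum_mul_seg {i m : ℕ} (h1 : 1 ≤ i) (h2 : i ≤ m) (h3 : m ≤ n)
    (u : Equiv.Perm (Fin (n+1)))
    (hu : ∀ x y : Fin (n+1), i - 1 ≤ (x:ℕ) → x < y → (y:ℕ) ≤ m → u x < u y) :
    invNum n (u * seg n i m) = invNum n u + (m + 1 - i) := by
  obtain ⟨d, hd⟩ : ∃ d, m - i = d := ⟨_, rfl⟩
  induction d generalizing i with
  | zero =>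
    have him : i = m := by omega
    subst him
    rw [seg_self]
    unfold sgen
    rw [dif_pos ⟨h1, by omega⟩]
    rw [invNum_mul_swap (b := ⟨i-1, by omega⟩) (c := ⟨i, by omega⟩)
      (by simp only [Fin.val_mk]; omega) u
      (hu _ _ (by simp only [Fin.val_mk]; omega)
        (by rw [Fin.lt_def]; simp only [Fin.val_mk]; omega)
        (by simp only [Fin.val_mk]; omega))]
    omega
  | succ d ih =>
    have hlt : i < m := by omega
    rw [seg_decomp (by omega : i ≤ m), ← mul_assoc]
    have hv := ih (by omega : 1 ≤ i + 1) (by omega : i + 1 ≤ m)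
      (fun x y hx hxy hy => hu x y (by omega) hxy hy) (by omega)
    set v := u * seg n (i+1) m with hvdef
    have hb : v ⟨i-1, by omega⟩ = u ⟨i-1, by omega⟩ := by
      rw [hvdef, Equiv.Perm.mul_apply]
      congr 1
      apply Fin.ext
      rw [seg_apply (by omega) (by omega) h3]
      simp only [Fin.val_mk]
      split_ifs <;> omega
    have hc : v ⟨i, by omega⟩ = u ⟨m, by omega⟩ := by
      rw [hvdef, Equiv.Perm.mul_apply]
      congr 1
      apply Fin.ext
      rw [seg_apply (by omega) (by omega) h3]
      simp only [Fin.val_mk]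
      split_ifs <;> omega
    unfold sgen
    rw [dif_pos ⟨h1, by omega⟩]
    rw [invNum_mul_swap (b := ⟨i-1, by omega⟩) (c := ⟨i, by omega⟩)
      (by simp only [Fin.val_mk]; omega) v
      (by
        rw [hb, hc]
        exact hu _ _ (by simp only [Fin.val_mk]; omega)
          (by rw [Fin.lt_def]; simp only [Fin.val_mk]; omega)
          (by simp only [Fin.val_mk]; omega)), hv]
    omega

lemma mono_mul_seg {i m : ℕ} (h1 : 1 ≤ i) (h2 : i ≤ m) (h3 : m ≤ n)
    (u : Equiv.Perm (Fin (n+1)))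
    (hu : ∀ x y : Fin (n+1), i - 1 ≤ (x:ℕ) → x < y → u x < u y)
    (x y : Fin (n+1)) (hx : i ≤ (x:ℕ)) (hxy : x < y) :
    (u * seg n i m) x < (u * seg n i m) y := by
  rw [Equiv.Perm.mul_apply, Equiv.Perm.mul_apply]
  have hxv := x.isLt
  have hyv := y.isLt
  have hxy' : (x:ℕ) < (y:ℕ) := Fin.lt_def.1 hxy
  have hsx := seg_apply h1 h2 h3 x
  have hsy := seg_apply h1 h2 h3 y
  apply hu
  · split_ifs at hsx <;> omega
  · rw [Fin.lt_def]
    split_ifs at hsx hsy <;> omega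

lemma wprod_append (l1 l2 : List ℕ) :
    wprod n (l1 ++ l2) = wprod n l1 * wprod n l2 := by
  unfold wprod
  rw [List.map_append, List.prod_append]

lemma segWord_length {i m : ℕ} (h : i ≤ m) : (segWord i m).length = m + 1 - i := by
  unfold segWord
  rw [List.length_reverse, List.length_range']

lemma segWord_mem {i m x : ℕ} (hx : x ∈ segWord i m) : i ≤ x ∧ x ≤ m := by
  unfold segWord at hx
  rw [List.mem_reverse, List.mem_range'_1] at hx
  omega

lemma main_aux (n : ℕ) (ps : List (ℕ × ℕ))
    (hin : ∀ p ∈ ps, 1 ≤ p.1 ∧ p.1 ≤ p.2 ∧ p.2 ≤ n)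
    (hchain : List.Pairwise (fun p q => p.1 < q.1 ∧ p.2 < q.2) ps) :
    invNum n (wprod n ((ps.map fun p => segWord p.1 p.2).flatten)) =
      ((ps.map fun p => segWord p.1 p.2).flatten).length ∧
    ((ps.map fun p => segWord p.1 p.2).flatten).length =
      ps.length + (ps.map fun p => p.2 - p.1).sum ∧
    ∀ x y : Fin (n+1), (∀ p ∈ ps, p.1 ≤ (x:ℕ)) → x < y →
      wprod n ((ps.map fun p => segWord p.1 p.2).flatten) x <
      wprod n ((ps.map fun p => segWord p.1 p.2).flatten) y := by
  induction ps using List.reverseRecOn with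
  | nil =>
    refine ⟨by simp [wprod, invNum_one], by simp, ?_⟩
    intro x y _ hxy
    simpa [wprod] using hxy
  | append_singleton qs q ih =>
    have hinq := hin q (by simp)
    have hin' : ∀ p ∈ qs, 1 ≤ p.1 ∧ p.1 ≤ p.2 ∧ p.2 ≤ n := fun p hp =>
      hin p (by simp [hp])
    rw [List.pairwise_append] at hchain
    obtain ⟨hch1, -, hlast⟩ := hchain
    have hlast' : ∀ p ∈ qs, p.1 < q.1 ∧ p.2 < q.2 := fun p hp =>
      hlast p hp q (by simp)
    obtain ⟨ihA, ihB, ihC⟩ := ih hin' hch1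
    set u := wprod n ((qs.map fun p => segWord p.1 p.2).flatten) with hudef
    have hflat : ((qs ++ [q]).map fun p => segWord p.1 p.2).flatten =
        ((qs.map fun p => segWord p.1 p.2).flatten) ++ segWord q.1 q.2 := by
      simp
    have hw : wprod n (((qs ++ [q]).map fun p => segWord p.1 p.2).flatten) =
        u * seg n q.1 q.2 := by
      rw [hflat, wprod_append, hudef, seg_eq_wprod]
    have hu' : ∀ x y : Fin (n+1), q.1 - 1 ≤ (x:ℕ) → x < y → u x < u y := by
      intro x y hx hxy
      exact ihC x y (fun p hp => by have := (hlast' p hp).1; omega) hxy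
    have hA : invNum n (u * seg n q.1 q.2) = invNum n u + (q.2 + 1 - q.1) :=
      invNum_mul_seg hinq.1 hinq.2.1 hinq.2.2 u (fun x y hx hxy _ => hu' x y hx hxy)
    have hlen : (((qs ++ [q]).map fun p => segWord p.1 p.2).flatten).length =
        ((qs.map fun p => segWord p.1 p.2).flatten).length + (q.2 + 1 - q.1) := by
      rw [hflat, List.length_append, segWord_length hinq.2.1]
    refine ⟨?_, ?_, ?_⟩
    · rw [hw, hA, ihA, hlen]
    · rw [hlen, ihB]
      simp only [List.map_append, List.sum_append, List.length_append]
      simp only [List.map_cons, List.map_nil, List.sum_cons, List.sum_nil,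
        List.length_cons, List.length_nil]
      have := hinq.2.1
      omega
    · intro x y hx hxy
      rw [hw]
      exact mono_mul_seg hinq.1 hinq.2.1 hinq.2.2 u hu' x y
        (hx q (by simp)) hxy

lemma invNum_sgen_mul_le (a : ℕ) (u : Equiv.Perm (Fin (n+1))) :
    invNum n (sgen n a * u) ≤ invNum n u + 1 := by
  unfold sgen
  split_ifs with h
  · set b : Fin (n+1) := ⟨a-1, by omega⟩ with hbdef
    set c : Fin (n+1) := ⟨a, by omega⟩ with hcdef
    have hbc : (b:ℕ) + 1 = (c:ℕ) := by simp [hbdef, hcdef]; omega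
    have hsub : invSet n (Equiv.swap b c * u) ⊆ insert (u⁻¹ b, u⁻¹ c) (invSet n u) := by
      intro p hp
      simp only [invSet, Finset.mem_filter, Finset.mem_univ, true_and] at hp
      simp only [Equiv.Perm.mul_apply] at hp
      obtain ⟨hlt, hinv⟩ := hp
      by_cases hA : u p.1 = b ∧ u p.2 = c
      · refine Finset.mem_insert.2 (Or.inl ?_)
        have e1 : p.1 = u⁻¹ b := by rw [← hA.1]; simp
        have e2 : p.2 = u⁻¹ c := by rw [← hA.2]; simp
        exact Prod.ext e1 e2
      · refine Finset.mem_insert.2 (Or.inr ?_)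
        simp only [invSet, Finset.mem_filter, Finset.mem_univ, true_and]
        refine ⟨hlt, ?_⟩
        by_cases hB : u p.1 = c ∧ u p.2 = b
        · rw [hB.1, hB.2, Fin.lt_def]; omega
        · rw [← swap_lt_iff hbc (x := u p.2) (y := u p.1) ?_ ?_]
          · exact hinv
          · intro hx; exact hB ⟨hx.2, hx.1⟩
          · intro hx; exact hA ⟨hx.2, hx.1⟩
    calc invNum n (Equiv.swap b c * u) ≤ (insert (u⁻¹ b, u⁻¹ c) (invSet n u)).card :=
          Finset.card_le_card hsub
      _ ≤ invNum n u + 1 := Finset.card_insert_le _ _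
  · simp [invNum]

lemma invNum_wprod_le (l : List ℕ) : invNum n (wprod n l) ≤ l.length := by
  induction l with
  | nil => simp [wprod, invNum_one]
  | cons a l ih =>
    have : wprod n (a :: l) = sgen n a * wprod n l := by
      simp [wprod]
    rw [this]
    calc invNum n (sgen n a * wprod n l) ≤ invNum n (wprod n l) + 1 :=
          invNum_sgen_mul_le a _
      _ ≤ l.length + 1 := by omega
      _ = (a :: l).length := by simp


end CanonAux

/-- If `w = T_{i_1}^{m_1} ⋯ T_{i_ℓ}^{m_ℓ}` is the canonical form of a fully commutative
element of `S_{n+1}` (with `i_j ≤ m_j`, `i_1 < ⋯ < i_ℓ`, `m_1 < ⋯ < m_ℓ`), then the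
concatenated word is a reduced word for `w`; in particular the Coxeter length of `w` is
`ℓ + Σ_j (m_j − i_j)`. -/
theorem canonical_word_isReduced (n : ℕ) (ps : List (ℕ × ℕ))
    (hin : ∀ p ∈ ps, 1 ≤ p.1 ∧ p.1 ≤ p.2 ∧ p.2 ≤ n)
    (hchain : List.Chain' (fun p q => p.1 < q.1 ∧ p.2 < q.2) ps) :
    IsReducedWord n (wprod n ((ps.map (fun p => segWord p.1 p.2)).flatten))
        ((ps.map (fun p => segWord p.1 p.2)).flatten) ∧
      ((ps.map (fun p => segWord p.1 p.2)).flatten).length =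
        ps.length + (ps.map (fun p => p.2 - p.1)).sum := by
  haveI : IsTrans (ℕ × ℕ) (fun p q => p.1 < q.1 ∧ p.2 < q.2) :=
    ⟨fun a b c h1 h2 => ⟨h1.1.trans h2.1, h1.2.trans h2.2⟩⟩
  have hpw : List.Pairwise (fun p q => p.1 < q.1 ∧ p.2 < q.2) ps :=
    List.isChain_iff_pairwise.1 hchain
  obtain ⟨hA, hB, -⟩ := CanonAux.main_aux n ps hin hpw
  refine ⟨⟨?_, rfl, ?_⟩, hB⟩
  · intro i hi
    rw [List.mem_flatten] at hi
    obtain ⟨l, hl, hil⟩ := hi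
    rw [List.mem_map] at hl
    obtain ⟨p, hp, rfl⟩ := hl
    have h1 := CanonAux.segWord_mem hil
    have h2 := hin p hp
    omega
  · intro l' _ hl'
    have hle := CanonAux.invNum_wprod_le (n := n) l'
    rw [hl'] at hle
    omega
end

section
/- The number of Dyck paths of semi-length n with (sum of peak heights) − (number of peaks) = 1 is n − 1, for n ≥ 2. -/
attribute [local instance] Classical.propDecidable

namespace Taux

/-- number of up-steps among the first `t` steps -/
def u (U : Finset ℕ) (t : ℕ) : ℕ := (U ∩ Finset.range t).card

/-- height after `t` steps -/
def hh (U : Finset ℕ) (t : ℕ) : ℕ := 2 * u U t - t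

lemma u_zero (U : Finset ℕ) : u U 0 = 0 := by simp [u]

lemma u_succ (U : Finset ℕ) (t : ℕ) :
    u U (t + 1) = u U t + (if t ∈ U then 1 else 0) := by
  classical
  simp only [u, Finset.range_add_one]
  by_cases ht : t ∈ U
  · rw [Finset.inter_insert_of_mem ht, Finset.card_insert_of_notMem (by simp), if_pos ht]
  · rw [Finset.inter_insert_of_notMem ht, if_neg ht, Nat.add_zero]

/-- the candidate Dyck path: `(UD)^i UUDD (UD)^(n-2-i)` -/
def Ui (n i : ℕ) : Finset ℕ :=
  (Finset.range (2 * n)).filter (fun t => if t % 2 = 0 then t ≠ 2 * i + 2 else t = 2 * i + 1)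

/-- the height profile of `Ui n i` -/
def ht (i t : ℕ) : ℕ := if t = 2 * i + 2 then 2 else t % 2

lemma mem_Ui {n i t : ℕ} :
    t ∈ Ui n i ↔ t < 2 * n ∧ (if t % 2 = 0 then t ≠ 2 * i + 2 else t = 2 * i + 1) := by
  simp [Ui]

lemma u_Ui (n i : ℕ) (hi : i + 2 ≤ n) :
    ∀ t, t ≤ 2 * n → 2 * u (Ui n i) t = t + ht i t := by
  intro t
  induction t with
  | zero => intro _; simp [u_zero, ht]
  | succ t ih =>
    intro htle
    have ht2n : t < 2 * n := by omega
    rw [u_succ, Nat.mul_add, ih (by omega)]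
    by_cases hmem : t ∈ Ui n i
    · rw [if_pos hmem]
      rw [mem_Ui] at hmem
      rcases hmem with ⟨-, hp⟩
      by_cases he : t % 2 = 0
      · rw [if_pos he] at hp
        simp only [ht]
        rw [if_neg hp, if_neg (by omega)]
        omega
      · rw [if_neg he] at hp
        simp only [ht]
        rw [if_neg (by omega), if_pos (by omega)]
        omega
    · rw [if_neg hmem]
      rw [mem_Ui] at hmem
      push_neg at hmem
      have hp := hmem ht2n
      by_cases he : t % 2 = 0
      · rw [if_pos he] at hp
        push_neg at hp
        simp only [ht]
        rw [if_pos hp, if_neg (by omega)]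
        omega
      · rw [if_neg he] at hp
        simp only [ht]
        rw [if_neg (by omega), if_neg (by omega)]
        omega

lemma Ui_subset (n i : ℕ) : Ui n i ⊆ Finset.range (2 * n) := Finset.filter_subset _ _

lemma Ui_mem_dyckPaths (n i : ℕ) (hi : i + 2 ≤ n) : Ui n i ∈ dyckPaths n := by
  simp only [dyckPaths, Finset.mem_filter, Finset.mem_powerset]
  refine ⟨Ui_subset n i, ?_, ?_⟩
  · have h2 := u_Ui n i hi (2 * n) le_rfl
    have : u (Ui n i) (2 * n) = (Ui n i).card := by
      rw [u, Finset.inter_eq_left.mpr (Ui_subset n i)]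
    rw [this] at h2
    simp only [ht] at h2
    rw [if_neg (by omega)] at h2
    omega
  · intro t htmem
    rw [Finset.mem_range] at htmem
    have h2 := u_Ui n i hi t (by omega)
    rw [u] at h2
    omega

lemma two_i_one_mem_Ui (n i : ℕ) (hi : i + 2 ≤ n) : 2 * i + 1 ∈ Ui n i := by
  rw [mem_Ui]
  refine ⟨by omega, ?_⟩
  rw [if_neg (by omega)]

lemma two_i_two_notMem_Ui (n i : ℕ) : 2 * i + 2 ∉ Ui n i := by
  rw [mem_Ui]
  push_neg
  intro _
  rw [if_pos (by omega)]
  simp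

lemma peakHeight_Ui (n i : ℕ) (hi : i + 2 ≤ n) (p : ℕ) (hp : p + 1 ≤ 2 * n) :
    peakHeight (Ui n i) p = ht i (p + 1) := by
  have h2 := u_Ui n i hi (p + 1) hp
  rw [u] at h2
  rw [peakHeight]
  omega

lemma statDiff_Ui (n i : ℕ) (hi : i + 2 ≤ n) : statDiff n (Ui n i) = 1 := by
  classical
  set P := peakSet n (Ui n i) with hP
  have hheight : ∀ p ∈ P, peakHeight (Ui n i) p = 1 + (if p = 2 * i + 1 then 1 else 0) := by
    intro p hp
    simp only [hP, peakSet, Finset.mem_filter, Finset.mem_range] at hp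
    rcases hp with ⟨hplt, hpU, hp1U, hp1lt⟩
    rw [peakHeight_Ui n i hi p (by omega)]
    rw [mem_Ui] at hpU
    rcases hpU with ⟨-, hpred⟩
    by_cases he : p % 2 = 0
    · rw [if_pos he] at hpred
      simp only [ht]
      rw [if_neg (by omega), if_neg (by omega)]
      omega
    · rw [if_neg he] at hpred
      simp only [ht]
      rw [if_pos (by omega), if_pos (by omega)]
  have hmemP : 2 * i + 1 ∈ P := by
    rw [hP, peakSet, Finset.mem_filter, Finset.mem_range]
    exact ⟨by omega, two_i_one_mem_Ui n i hi, two_i_two_notMem_Ui n i, by omega⟩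
  have hsum : (∑ p ∈ P, peakHeight (Ui n i) p) = P.card + 1 := by
    rw [Finset.sum_congr rfl hheight, Finset.sum_add_distrib]
    rw [Finset.sum_const, smul_eq_mul, mul_one]
    congr 1
    rw [Finset.sum_ite_eq' P (2 * i + 1) (fun _ => 1), if_pos hmemP]
  rw [statDiff, ← hP, hsum]
  omega

section Converse

variable {n : ℕ} {U : Finset ℕ}

lemma dyck_spec (hU : U ∈ dyckPaths n) :
    U ⊆ Finset.range (2 * n) ∧ U.card = n ∧ ∀ t, t ≤ 2 * n → t ≤ 2 * u U t := by
  simp only [dyckPaths, Finset.mem_filter, Finset.mem_powerset] at hU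
  refine ⟨hU.1, hU.2.1, ?_⟩
  intro t htle
  exact hU.2.2 t (by rw [Finset.mem_range]; omega)

lemma hh_eq (hU : U ∈ dyckPaths n) {t : ℕ} (htle : t ≤ 2 * n) :
    2 * u U t = t + hh U t := by
  have h := (dyck_spec hU).2.2 t htle
  rw [hh]
  omega

lemma hh_zero (U : Finset ℕ) : hh U 0 = 0 := by simp [hh, u_zero]

lemma hh_2n (hU : U ∈ dyckPaths n) : hh U (2 * n) = 0 := by
  obtain ⟨hsub, hcard, -⟩ := dyck_spec hU
  rw [hh, u, Finset.inter_eq_left.mpr hsub, hcard]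
  omega

lemma step_mem (hU : U ∈ dyckPaths n) {t : ℕ} (htlt : t < 2 * n) (htU : t ∈ U) :
    hh U (t + 1) = hh U t + 1 := by
  have h1 := hh_eq hU (show t ≤ 2 * n by omega)
  have h2 := hh_eq hU (show t + 1 ≤ 2 * n by omega)
  have h3 := u_succ U t
  rw [if_pos htU] at h3
  omega

lemma step_not_mem (hU : U ∈ dyckPaths n) {t : ℕ} (htlt : t < 2 * n) (htU : t ∉ U) :
    hh U t = hh U (t + 1) + 1 := by
  have h1 := hh_eq hU (show t ≤ 2 * n by omega)
  have h2 := hh_eq hU (show t + 1 ≤ 2 * n by omega)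
  have h3 := u_succ U t
  rw [if_neg htU] at h3
  omega

lemma mem_iff_step (hU : U ∈ dyckPaths n) {t : ℕ} (htlt : t < 2 * n) :
    t ∈ U ↔ hh U (t + 1) = hh U t + 1 := by
  constructor
  · exact step_mem hU htlt
  · intro h
    by_contra htU
    have := step_not_mem hU htlt htU
    omega

lemma hh_parity (hU : U ∈ dyckPaths n) {t : ℕ} (htle : t ≤ 2 * n) :
    hh U t % 2 = t % 2 := by
  have h := hh_eq hU htle
  omega

lemma peakHeight_eq_hh (U : Finset ℕ) (p : ℕ) : peakHeight U p = hh U (p + 1) := rfl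

lemma peakHeight_pos (hU : U ∈ dyckPaths n) {p : ℕ} (hp : p ∈ peakSet n U) :
    1 ≤ peakHeight U p := by
  simp only [peakSet, Finset.mem_filter, Finset.mem_range] at hp
  rcases hp with ⟨hplt, hpU, -, -⟩
  rw [peakHeight_eq_hh, step_mem hU hplt hpU]
  omega

/-- if the statistic is 1, the height never exceeds 2 -/
lemma hh_le_two (hU : U ∈ dyckPaths n) (hstat : statDiff n U = 1) :
    ∀ t, t ≤ 2 * n → hh U t ≤ 2 := by
  by_contra hcon
  push_neg at hcon
  classical
  -- M : the maximal height
  set Im := (Finset.range (2 * n + 1)).image (hh U) with hIm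
  have hImne : Im.Nonempty := ⟨hh U 0, by rw [hIm]; exact Finset.mem_image_of_mem _ (by simp)⟩
  set M := Im.max' hImne with hM
  have hMge : 3 ≤ M := by
    obtain ⟨t, htle, hht⟩ := hcon
    have : hh U t ∈ Im := by
      rw [hIm]; exact Finset.mem_image_of_mem _ (by rw [Finset.mem_range]; omega)
    have := Im.le_max' _ this
    omega
  have hbound : ∀ t, t ≤ 2 * n → hh U t ≤ M := by
    intro t htle
    exact Im.le_max' _ (by rw [hIm]; exact Finset.mem_image_of_mem _ (by rw [Finset.mem_range]; omega))
  -- t₀ : the last time the maximum is attained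
  set S := (Finset.range (2 * n + 1)).filter (fun t => hh U t = M) with hS
  have hSne : S.Nonempty := by
    obtain ⟨v, hv⟩ := Finset.mem_image.mp (Im.max'_mem hImne)
    exact ⟨v, by rw [hS, Finset.mem_filter]; exact ⟨hv.1, hv.2⟩⟩
  set t₀ := S.max' hSne with ht₀
  have ht₀S : t₀ ∈ S := S.max'_mem hSne
  rw [hS, Finset.mem_filter, Finset.mem_range] at ht₀S
  have ht₀le : t₀ ≤ 2 * n := by omega
  have ht₀h : hh U t₀ = M := ht₀S.2
  have ht₀lt : t₀ < 2 * n := by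
    rcases Nat.lt_or_ge t₀ (2 * n) with h | h
    · exact h
    · exfalso; have : t₀ = 2 * n := by omega
      rw [this, hh_2n hU] at ht₀h; omega
  have ht₀pos : 1 ≤ t₀ := by
    by_contra h
    have : t₀ = 0 := by omega
    rw [this, hh_zero] at ht₀h; omega
  -- t₀ ∉ U
  have ht₀U : t₀ ∉ U := by
    intro hmem
    have hstep := step_mem hU ht₀lt hmem
    have h1 : hh U (t₀ + 1) = M := by
      have := hbound (t₀ + 1) (by omega); omega
    have : t₀ + 1 ∈ S := by
      rw [hS, Finset.mem_filter, Finset.mem_range]; exact ⟨by omega, h1⟩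
    have := S.le_max' _ this
    omega
  -- t₀ - 1 ∈ U
  have hprev : t₀ - 1 ∈ U := by
    by_contra h
    have hstep := step_not_mem hU (show t₀ - 1 < 2 * n by omega) h
    have heq : t₀ - 1 + 1 = t₀ := by omega
    rw [heq] at hstep
    have := hbound (t₀ - 1) (by omega)
    omega
  -- p is a peak of height M
  set p := t₀ - 1 with hp
  have hpP : p ∈ peakSet n U := by
    rw [peakSet, Finset.mem_filter, Finset.mem_range]
    refine ⟨by omega, hprev, ?_, by omega⟩
    have : p + 1 = t₀ := by omega
    rw [this]; exact ht₀U
  have hpH : peakHeight U p = M := by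
    rw [peakHeight_eq_hh]
    have : p + 1 = t₀ := by omega
    rw [this, ht₀h]
  -- the sum of peak heights is at least M + (card - 1)
  have hsum : peakHeight U p + ∑ q ∈ (peakSet n U).erase p, peakHeight U q
      = ∑ q ∈ peakSet n U, peakHeight U q := Finset.add_sum_erase _ _ hpP
  have herase : ((peakSet n U).erase p).card ≤ ∑ q ∈ (peakSet n U).erase p, peakHeight U q := by
    have := Finset.card_nsmul_le_sum ((peakSet n U).erase p) (peakHeight U) 1
      (fun q hq => peakHeight_pos hU (Finset.mem_of_mem_erase hq))
    simpa using this
  have hcarde : ((peakSet n U).erase p).card = (peakSet n U).card - 1 :=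
    Finset.card_erase_of_mem hpP
  have hcardpos : 1 ≤ (peakSet n U).card := Finset.card_pos.mpr ⟨p, hpP⟩
  rw [statDiff] at hstat
  omega

/-- any time at height 2 gives a peak of height 2 just before -/
lemma peak_of_two (hU : U ∈ dyckPaths n) (hstat : statDiff n U = 1)
    {t : ℕ} (htle : t ≤ 2 * n) (h2 : hh U t = 2) :
    t - 1 ∈ peakSet n U ∧ peakHeight U (t - 1) = 2 ∧ 1 ≤ t := by
  have hle2 := hh_le_two hU hstat
  have hpar := hh_parity hU htle
  have htpos : 1 ≤ t := by
    by_contra h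
    have : t = 0 := by omega
    rw [this, hh_zero] at h2; omega
  have htlt : t < 2 * n := by
    rcases Nat.lt_or_ge t (2 * n) with h | h
    · exact h
    · exfalso
      have : t = 2 * n := by omega
      rw [this, hh_2n hU] at h2; omega
  -- t ∉ U
  have htU : t ∉ U := by
    intro hmem
    have := step_mem hU htlt hmem
    have := hle2 (t + 1) (by omega)
    omega
  -- t - 1 ∈ U
  have hprev : t - 1 ∈ U := by
    by_contra h
    have hstep := step_not_mem hU (show t - 1 < 2 * n by omega) h
    have heq : t - 1 + 1 = t := by omega
    rw [heq] at hstep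
    have := hle2 (t - 1) (by omega)
    have hpar2 := hh_parity hU (show t - 1 ≤ 2 * n by omega)
    omega
  refine ⟨?_, ?_, htpos⟩
  · rw [peakSet, Finset.mem_filter, Finset.mem_range]
    refine ⟨by omega, hprev, ?_, by omega⟩
    have : t - 1 + 1 = t := by omega
    rw [this]; exact htU
  · rw [peakHeight_eq_hh]
    have : t - 1 + 1 = t := by omega
    rw [this, h2]

/-- if the statistic is 1, there is a unique time at height 2 -/
lemma exists_unique_two (hU : U ∈ dyckPaths n) (hstat : statDiff n U = 1) :
    ∃ τ, τ ≤ 2 * n ∧ hh U τ = 2 ∧ ∀ t, t ≤ 2 * n → hh U t = 2 → t = τ := by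
  classical
  have hle2 := hh_le_two hU hstat
  set P := peakSet n U with hP
  set F := P.filter (fun p => peakHeight U p = 2) with hF
  -- statDiff = F.card
  have hheight : ∀ p ∈ P, peakHeight U p = 1 + (if peakHeight U p = 2 then 1 else 0) := by
    intro p hp
    have h1 := peakHeight_pos hU hp
    have hplt : p + 1 ≤ 2 * n := by
      rw [hP, peakSet, Finset.mem_filter] at hp
      omega
    have h2 : peakHeight U p ≤ 2 := by
      rw [peakHeight_eq_hh]; exact hle2 (p + 1) hplt
    by_cases he : peakHeight U p = 2
    · rw [if_pos he]; omega
    · rw [if_neg he]; omega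
  have hsum : (∑ p ∈ P, peakHeight U p) = P.card + F.card := by
    rw [Finset.sum_congr rfl hheight, Finset.sum_add_distrib]
    rw [Finset.sum_const, smul_eq_mul, mul_one]
    congr 1
    rw [hF, Finset.card_filter]
  have hFcard : F.card = 1 := by
    rw [statDiff, ← hP, hsum] at hstat
    omega
  obtain ⟨p₀, hp₀⟩ := Finset.card_eq_one.mp hFcard
  have hp₀F : p₀ ∈ F := by rw [hp₀]; simp
  rw [hF, Finset.mem_filter] at hp₀F
  rcases hp₀F with ⟨hp₀P, hp₀H⟩
  have hp₀lt : p₀ + 1 ≤ 2 * n := by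
    rw [hP, peakSet, Finset.mem_filter] at hp₀P
    omega
  refine ⟨p₀ + 1, hp₀lt, ?_, ?_⟩
  · rw [← peakHeight_eq_hh]; exact hp₀H
  · intro t htle h2
    obtain ⟨hmem, hH, htpos⟩ := peak_of_two hU hstat htle h2
    have : t - 1 ∈ F := by
      rw [hF, Finset.mem_filter]; exact ⟨hmem, hH⟩
    rw [hp₀] at this
    rw [Finset.mem_singleton] at this
    omega

/-- the converse direction: a path with statistic 1 is one of the `Ui` -/
lemma converse (hn : 2 ≤ n) (hU : U ∈ dyckPaths n) (hstat : statDiff n U = 1) :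
    ∃ i, i + 2 ≤ n ∧ U = Ui n i := by
  classical
  obtain ⟨τ, hτle, hτ2, hτuniq⟩ := exists_unique_two hU hstat
  have hle2 := hh_le_two hU hstat
  have hτpar := hh_parity hU hτle
  have hτpos : 2 ≤ τ := by
    have h0 : hh U 0 = 0 := hh_zero U
    have h1par := hh_parity hU (show 1 ≤ 2 * n by omega)
    rcases Nat.lt_or_ge τ 2 with h | h
    · exfalso
      interval_cases τ
      · rw [hh_zero] at hτ2; omega
      · omega
    · exact h
  have hτlt : τ < 2 * n := by
    rcases Nat.lt_or_ge τ (2 * n) with h | h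
    · exact h
    · exfalso
      have : τ = 2 * n := by omega
      rw [this, hh_2n hU] at hτ2; omega
  have hτeven : τ % 2 = 0 := by omega
  refine ⟨τ / 2 - 1, by omega, ?_⟩
  set i := τ / 2 - 1 with hi
  have hτeq : τ = 2 * i + 2 := by omega
  -- the full height formula
  have hform : ∀ t, t ≤ 2 * n → hh U t = (if t = 2 * i + 2 then 2 else t % 2) := by
    intro t htle
    by_cases he : t = 2 * i + 2
    · rw [if_pos he, he, ← hτeq]; exact hτ2
    · rw [if_neg he]
      have h1 := hle2 t htle
      have h2 := hh_parity hU htle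
      have h3 : hh U t ≠ 2 := by
        intro hcon
        exact he (by rw [← hτeq]; exact hτuniq t htle hcon)
      omega
  ext t
  by_cases htlt : t < 2 * n
  · rw [mem_iff_step hU htlt, mem_Ui]
    rw [hform t (by omega), hform (t + 1) (by omega)]
    constructor
    · intro hstep
      refine ⟨htlt, ?_⟩
      split_ifs at hstep ⊢ <;> omega
    · rintro ⟨-, hpred⟩
      split_ifs at hpred ⊢ <;> omega
  · constructor
    · intro hmem
      exact absurd (Finset.mem_range.mp ((dyck_spec hU).1 hmem)) htlt
    · intro hmem
      exact absurd (Finset.mem_range.mp (Ui_subset n _ hmem)) htlt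

end Converse

lemma Ui_injOn (n : ℕ) :
    ∀ i ∈ Finset.range (n - 1), ∀ j ∈ Finset.range (n - 1), Ui n i = Ui n j → i = j := by
  intro i hi j hj heq
  rw [Finset.mem_range] at hi hj
  have h1 : 2 * i + 1 ∈ Ui n i := two_i_one_mem_Ui n i (by omega)
  rw [heq, mem_Ui] at h1
  rcases h1 with ⟨-, hp⟩
  rw [if_neg (by omega)] at hp
  omega

end Taux

/-- For `n ≥ 2`, the number of Dyck paths of semi-length `n` with
(sum of peak heights) − (number of peaks) `= 1` is `n − 1`. -/
theorem T_one (n : ℕ) (hn : 2 ≤ n) : T n 1 = n - 1 := by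
  classical
  have hset : (dyckPaths n).filter (fun U => statDiff n U = 1)
      = (Finset.range (n - 1)).image (fun i => Taux.Ui n i) := by
    ext U
    rw [Finset.mem_filter, Finset.mem_image]
    constructor
    · intro ⟨hU, hstat⟩
      obtain ⟨i, hi, heq⟩ := Taux.converse hn hU hstat
      exact ⟨i, Finset.mem_range.mpr (by omega), heq.symm⟩
    · rintro ⟨i, hi, rfl⟩
      rw [Finset.mem_range] at hi
      exact ⟨Taux.Ui_mem_dyckPaths n i (by omega), Taux.statDiff_Ui n i (by omega)⟩
  rw [T, hset, Finset.card_image_of_injOn (Taux.Ui_injOn n), Finset.card_range]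
end

section
/- Let w = s_{i_1} s_{i_2} ⋯ s_{i_d} be a reduced expression in a simply-laced Coxeter group. If between every pair of consecutive occurrences of any generator s_i there are exactly two letters not commuting with s_i, and after the last occurrence of each generator s_i there is at most one letter not commuting with s_i, then w is fully commutative (no reduced word for w contains a braid factor s_i s_j s_i with s_i s_j ≠ s_j s_i). -/
namespace StembAux

open List CoxeterSystem Finsupp

attribute [local instance] Classical.propDecidable

noncomputable section

variable {B : Type*} {W : Type*} [Group W] {M : CoxeterMatrix B} (cs : CoxeterSystem M W)

local prefix:100 "s" => cs.simple
local prefix:100 "π" => cs.wordProd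
local prefix:100 "ris" => cs.rightInvSeq


theorem simple_conj_eq_simple_iff (i : B) (x : W) :
    (s i * x * s i = s i) ↔ (x = s i) := by
  constructor
  · intro h
    have := congrArg (fun z => s i * z * s i) h
    simpa [← mul_assoc, cs.simple_mul_simple_cancel_right,
      cs.simple_mul_simple_cancel_left, cs.simple_mul_simple_self] using this
  · rintro rfl; simp [cs.simple_mul_simple_self, cs.simple_mul_simple_cancel_right]

theorem mu_involutive (i : B) :
    Function.Involutive (fun x : W × ZMod 2 =>
      (s i * x.1 * s i, x.2 + if x.1 = s i then 1 else 0)) := by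
  rintro ⟨x, e⟩
  have h1 : s i * (s i * x * s i) * s i = x := by
    simp [← mul_assoc, cs.simple_mul_simple_self i, cs.simple_mul_simple_cancel_right,
      cs.simple_mul_simple_cancel_left]
  simp only [h1, simple_conj_eq_simple_iff]
  have h11 : (1 + 1 : ZMod 2) = 0 := by decide
  by_cases h : x = s i <;> simp [h, add_assoc, h11]

/-- The reflection-cocycle permutation attached to a simple reflection. -/
def mu (i : B) : Equiv.Perm (W × ZMod 2) := (mu_involutive cs i).toPerm

theorem mu_apply (i : B) (x : W × ZMod 2) :
    mu cs i x = (s i * x.1 * s i, x.2 + if x.1 = s i then 1 else 0) := rfl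

/-- Applying the product of cocycle permutations along a word. -/
theorem prod_map_mu_apply (ω : List B) (t : W) (e : ZMod 2) :
    ((ω.map (mu cs)).prod) (t, e) =
      (π ω * t * (π ω)⁻¹, e + ((ris ω).count t : ZMod 2)) := by
  induction ω generalizing e with
  | nil => simp
  | cons c ω ih =>
    rw [List.map_cons, List.prod_cons, Equiv.Perm.mul_apply, ih]
    rw [mu_apply]
    have hris : ris (c :: ω) = ((π ω)⁻¹ * (s c) * (π ω)) :: ris ω := rfl
    have hcond : (π ω * t * (π ω)⁻¹ = s c) ↔ ((π ω)⁻¹ * (s c) * (π ω) = t) := by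
      constructor
      · intro h; rw [← h]; group
      · intro h; rw [← h]; group
    rw [hris, List.count_cons]
    refine Prod.ext ?_ ?_
    · show s c * (π ω * t * (π ω)⁻¹) * s c = π (c :: ω) * t * (π (c :: ω))⁻¹
      rw [cs.wordProd_cons, mul_inv_rev, cs.inv_simple]; group
    · show e + _ + _ = e + _
      push_cast
      rw [hcond]
      by_cases h : (π ω)⁻¹ * (s c) * (π ω) = t <;> simp [h] <;> ring


/-- Product of the images of an alternating word under any map into a monoid. -/
theorem prod_map_alternatingWord {G : Type*} [Monoid G] (f : B → G) (i j : B) (m : ℕ) :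
    ((alternatingWord i j m).map f).prod =
      (if Even m then 1 else f j) * (f i * f j) ^ (m / 2) := by
  induction m with
  | zero => simp [alternatingWord]
  | succ m ih =>
    rw [alternatingWord_succ', List.map_cons, List.prod_cons, ih]
    by_cases hm : Even m
    · have h₁ : ¬ Even (m + 1) := by simp [hm, parity_simps]
      have h₂ : (m + 1) / 2 = m / 2 := by obtain ⟨r, rfl⟩ := hm; omega
      simp [hm, h₁, h₂]
    · have h₁ : Even (m + 1) := by simp [hm, parity_simps]
      have h₂ : (m + 1) / 2 = m / 2 + 1 := by
        rcases Nat.odd_iff.mp (Nat.not_even_iff_odd.mp hm) with h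
        omega
      simp [hm, h₁, h₂, ← pow_succ', ← mul_assoc]

/-- The uniform formula for successive quotients of alternating word products. -/
theorem wordProd_alternating_inv_mul_succ (i j : B) (n : ℕ) :
    (π (alternatingWord i j n))⁻¹ * π (alternatingWord i j (n + 1)) =
      (s i * s j) ^ (-(n : ℤ)) * s j := by
  rw [cs.prod_alternatingWord_eq_mul_pow, cs.prod_alternatingWord_eq_mul_pow]
  have hb : (s j)⁻¹ = s j := cs.inv_simple j
  have hK : ∀ (z : ℤ), s j * (s i * s j) ^ z = (s i * s j) ^ (-z) * s j := by
    intro z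
    have hsc : SemiconjBy (s j) (s i * s j) ((s i * s j)⁻¹) := by
      show s j * (s i * s j) = (s i * s j)⁻¹ * s j
      rw [mul_inv_rev, cs.inv_simple, cs.inv_simple]
      simp [mul_assoc]
    have := (hsc.zpow_right z).eq
    rwa [inv_zpow, ← zpow_neg] at this
  have key : ∀ (a b : ℕ), ((s i * s j) ^ a)⁻¹ * (s j * (s i * s j) ^ b)
      = (s i * s j) ^ (-(a : ℤ) - b) * s j := by
    intro a b
    rw [← zpow_natCast (s i * s j) a, ← zpow_natCast (s i * s j) b, hK, ← zpow_neg,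
      ← mul_assoc, ← zpow_add]
    congr 2 <;> omega
  by_cases hn : Even n
  · have h1 : ¬ Even (n + 1) := by simp [hn, parity_simps]
    rw [if_pos hn, if_neg h1, one_mul, key]
    congr 2 <;> omega
  · have h1 : Even (n + 1) := by simp [hn, parity_simps]
    rw [if_neg hn, if_pos h1, one_mul, mul_inv_rev, hb, mul_assoc, key]
    congr 2 <;> omega

/-- The right inversion sequence of an alternating word, in closed form. -/
theorem rightInvSeq_alternatingWord (i j : B) (n : ℕ) :
    ris (alternatingWord i j n) =
      (List.range n).map (fun k => (s i * s j) ^ (-((n - 1 - k : ℕ) : ℤ)) * s j) := by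
  induction n with
  | zero => simp [alternatingWord]
  | succ n ih =>
    rw [alternatingWord_succ']
    show ((π (alternatingWord i j n))⁻¹ * s _ * π (alternatingWord i j n)) :: _ = _
    have hhead : (π (alternatingWord i j n))⁻¹ * s (if Even n then j else i)
        * π (alternatingWord i j n) = (s i * s j) ^ (-(n : ℤ)) * s j := by
      have hc : s (if Even n then j else i) * π (alternatingWord i j n)
          = π (alternatingWord i j (n + 1)) := by
        rw [alternatingWord_succ', cs.wordProd_cons]
      rw [mul_assoc, hc, wordProd_alternating_inv_mul_succ cs i j n]
    have hrange : List.range (n+1) = 0 :: (List.range n).map (·+1) := by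
      rw [List.range_succ_eq_map]
    rw [hhead, ih, hrange, List.map_cons, List.map_map]
    congr 1
    refine List.map_congr_left fun a ha => ?_
    simp only [Function.comp_apply]
    have h0 : n + 1 - 1 - (a + 1) = n - 1 - a := by omega
    rw [h0]

-- new material

theorem mu_liftable : M.IsLiftable (mu cs) := by
  intro i j
  rcases Nat.eq_zero_or_pos (M i j) with h0 | hpos
  · rw [h0, pow_zero]
  set m := M i j with hm
  have hprod : ((alternatingWord i j (2 * m)).map (mu cs)).prod = (mu cs i * mu cs j) ^ m := by
    rw [prod_map_alternatingWord]
    have : Even (2 * m) := ⟨m, by ring⟩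
    rw [if_pos this, one_mul]
    congr 1
    omega
  rw [← hprod]
  apply Equiv.ext
  rintro ⟨t, e⟩
  rw [prod_map_mu_apply]
  have hπ : π (alternatingWord i j (2 * m)) = 1 := by
    rw [cs.prod_alternatingWord_eq_mul_pow]
    have : Even (2 * m) := ⟨m, by ring⟩
    rw [if_pos this, one_mul]
    have h2 : 2 * m / 2 = m := by omega
    rw [h2, hm, cs.simple_mul_simple_pow]
  have hcount : ∃ c : ℕ, (ris (alternatingWord i j (2 * m))).count t = c + c := by
    rw [rightInvSeq_alternatingWord]
    have h2m : 2 * m = m + m := by ring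
    rw [h2m, List.range_add, List.map_append, List.map_map]
    have heq : (List.range m).map ((fun k => (s i * s j) ^ (-((m + m - 1 - k : ℕ) : ℤ)) * s j)
          ∘ (fun k => m + k))
        = (List.range m).map (fun k => (s i * s j) ^ (-((m + m - 1 - k : ℕ) : ℤ)) * s j) := by
      refine List.map_congr_left fun a ha => ?_
      simp only [Function.comp_apply]
      have haa : a < m := List.mem_range.mp ha
      have h1 : (m + m - 1 - (m + a) : ℕ) = (m - 1 - a : ℕ) := by omega
      have h2 : (m + m - 1 - a : ℕ) = (m - 1 - a) + m := by omega
      rw [h1, h2]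
      have : ((((m - 1 - a) + m : ℕ)) : ℤ) = ((m - 1 - a : ℕ) : ℤ) + (m : ℤ) := by push_cast; ring
      rw [this, neg_add, zpow_add]
      have : (s i * s j) ^ (-(m : ℤ)) = 1 := by
        rw [zpow_neg, zpow_natCast, hm, cs.simple_mul_simple_pow, inv_one]
      rw [this, mul_one]
    rw [heq, List.count_append]
    exact ⟨_, rfl⟩
  obtain ⟨c, hc⟩ := hcount
  have hcast : ((ris (alternatingWord i j (2 * m))).count t : ZMod 2) = 0 := by
    rw [hc]
    push_cast
    ring_nf
    rw [show ((2 : ZMod 2)) = 0 from rfl]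
    ring
  rw [hπ, hcast, add_zero, one_mul, inv_one, mul_one]
  rfl

/-- The cocycle homomorphism. -/
def phi2 : W →* Equiv.Perm (W × ZMod 2) := cs.lift ⟨mu cs, mu_liftable cs⟩

theorem phi2_wordProd (ω : List B) : phi2 cs (π ω) = (ω.map (mu cs)).prod := by
  show phi2 cs ((ω.map cs.simple).prod) = _
  rw [map_list_prod, List.map_map]
  congr 1
  refine List.map_congr_left fun a _ => ?_
  exact cs.lift_apply_simple (mu_liftable cs) a

theorem count_ris_parity {ω ω' : List B} (h : π ω = π ω') (t : W) :
    ((ris ω).count t : ZMod 2) = ((ris ω').count t : ZMod 2) := by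
  have h1 := congrArg (fun g : Equiv.Perm (W × ZMod 2) => g (t, (0 : ZMod 2)))
    ((phi2_wordProd cs ω).symm.trans (h ▸ phi2_wordProd cs ω'))
  simp only [prod_map_mu_apply, h] at h1
  have := congrArg Prod.snd h1
  simpa using this

theorem mem_ris_of_eq_wordProd {l l' : List B} (hl' : cs.IsReduced l')
    (h : π l = π l') {t : W} (ht : t ∈ ris l') : t ∈ ris l := by
  have c1 : (ris l').count t = 1 := List.count_eq_one_of_mem hl'.nodup_rightInvSeq ht
  have hp := count_ris_parity cs h t
  rw [c1] at hp
  by_contra hmem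
  rw [List.count_eq_zero.mpr hmem] at hp
  simp at hp


/-- Simply-laced Cartan integers. -/
def cartan (M : CoxeterMatrix B) (i j : B) : ℤ :=
  if i = j then 2 else if M i j = 3 then -1 else 0

theorem cartan_symm (M : CoxeterMatrix B) (i j : B) : cartan M i j = cartan M j i := by
  unfold cartan
  rcases em (i = j) with rfl | h
  · simp
  · rw [if_neg h, if_neg (Ne.symm h), M.symmetric]

theorem cartan_diag (M : CoxeterMatrix B) (i : B) : cartan M i i = 2 := by simp [cartan]

theorem cartan_of_three (M : CoxeterMatrix B) {i j : B} (hne : i ≠ j) (h : M i j = 3) :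
    cartan M i j = -1 := by simp [cartan, hne, h]

theorem cartan_of_two (M : CoxeterMatrix B) {i j : B} (hne : i ≠ j) (h : M i j = 2) :
    cartan M i j = 0 := by
  have : ¬ (M i j = 3) := by omega
  simp [cartan, hne, this]

/-- The pairing `⟨αᵢ, ·⟩` on the coroot lattice. -/
def pair (M : CoxeterMatrix B) (i : B) : (B →₀ ℤ) →+ ℤ where
  toFun v := v.sum fun j c => c * cartan M i j
  map_zero' := by simp
  map_add' v w := by
    exact Finsupp.sum_add_index' (fun j => by ring) (fun j b₁ b₂ => by ring)

theorem pair_apply (i : B) (v : B →₀ ℤ) :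
    pair M i v = v.sum fun j c => c * cartan M i j := rfl

theorem pair_single (i j : B) (c : ℤ) :
    pair M i (Finsupp.single j c) = c * cartan M i j := by
  rw [pair_apply, Finsupp.sum_single_index]
  ring

/-- Simple coroot. -/
def delta (i : B) : B →₀ ℤ := Finsupp.single i 1

theorem pair_delta (i j : B) : pair M i (delta j) = cartan M i j := by
  rw [delta, pair_single, one_mul]

/-- The reflection attached to a simple index, as a function. -/
def sigmaFun (M : CoxeterMatrix B) (i : B) (v : B →₀ ℤ) : B →₀ ℤ :=
  v - pair M i v • delta i

theorem sigma_involutive (i : B) : Function.Involutive (sigmaFun M i) := by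
  intro v
  unfold sigmaFun
  rw [map_sub, map_zsmul, pair_delta, cartan_diag, smul_eq_mul]
  module

instance addAutMulGroup (A : Type*) [Add A] : Group (AddAut A) where
  mul g h := h.trans g
  one := AddEquiv.refl _
  inv := AddEquiv.symm
  mul_assoc _ _ _ := rfl
  one_mul _ := rfl
  mul_one _ := rfl
  inv_mul_cancel := AddEquiv.self_trans_symm

@[simp]
theorem addAut_one_apply' {A : Type*} [Add A] (a : A) : (1 : AddAut A) a = a := rfl

/-- The reflection attached to a simple index, as an additive automorphism. -/
def sigma (M : CoxeterMatrix B) (i : B) : AddAut (B →₀ ℤ) :=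
  { toFun := sigmaFun M i
    invFun := sigmaFun M i
    left_inv := sigma_involutive i
    right_inv := sigma_involutive i
    map_add' := fun v w => by
      show sigmaFun M i (v + w) = sigmaFun M i v + sigmaFun M i w
      unfold sigmaFun
      rw [map_add]
      module }

theorem sigma_apply (i : B) (v : B →₀ ℤ) :
    sigma M i v = v - pair M i v • delta i := rfl

theorem sigma_liftable (hsl : ∀ i j : B, i ≠ j → M i j = 2 ∨ M i j = 3) :
    M.IsLiftable (sigma M) := by
  intro i j
  rcases em (i = j) with rfl | hne
  · rw [M.diagonal, pow_one]
    refine AddEquiv.ext fun v => ?_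
    show sigmaFun M i (sigmaFun M i v) = v
    exact sigma_involutive i v
  · have hsymm : cartan M j i = cartan M i j := cartan_symm M j i
    rcases hsl i j hne with h2 | h3
    · rw [h2]
      refine AddEquiv.ext fun v => ?_
      have hc : cartan M i j = 0 := cartan_of_two M hne h2
      rw [pow_two]
      show (sigma M i) ((sigma M j) ((sigma M i) ((sigma M j) v))) = v
      simp only [sigma_apply, map_sub, map_zsmul, pair_delta, cartan_diag, hc, hsymm, smul_eq_mul]
      module
    · rw [h3]
      refine AddEquiv.ext fun v => ?_
      have hc : cartan M i j = -1 := cartan_of_three M hne h3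
      rw [pow_succ, pow_two]
      show (sigma M i) ((sigma M j) ((sigma M i) ((sigma M j)
        ((sigma M i) ((sigma M j) v))))) = v
      simp only [sigma_apply, map_sub, map_zsmul, pair_delta, cartan_diag, hc, hsymm, smul_eq_mul]
      module

-- new material

variable (hsl : ∀ i j : B, i ≠ j → M i j = 2 ∨ M i j = 3)

/-- The simply-laced reflection representation. -/
def phi (hsl : ∀ i j : B, i ≠ j → M i j = 2 ∨ M i j = 3) : W →* AddAut (B →₀ ℤ) :=
  cs.lift ⟨sigma M, sigma_liftable hsl⟩

theorem phi_simple (i : B) : phi cs hsl (s i) = sigma M i :=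
  cs.lift_apply_simple (sigma_liftable hsl) i

theorem phi_simple_apply (i : B) (v : B →₀ ℤ) :
    phi cs hsl (s i) v = v - pair M i v • delta i := by
  rw [phi_simple]; rfl

/-- The invariant symmetric bilinear form. -/
def QF (M : CoxeterMatrix B) (v w : B →₀ ℤ) : ℤ :=
  v.sum fun x a => a * pair M x w

theorem QF_single (j : B) (a : ℤ) (w : B →₀ ℤ) :
    QF M (Finsupp.single j a) w = a * pair M j w := by
  unfold QF
  rw [Finsupp.sum_single_index]
  ring

theorem QF_delta_left (j : B) (w : B →₀ ℤ) : QF M (delta j) w = pair M j w := by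
  rw [delta, QF_single, one_mul]

theorem QF_delta_right (j : B) (v : B →₀ ℤ) : QF M v (delta j) = pair M j v := by
  unfold QF
  rw [pair_apply]
  exact Finsupp.sum_congr fun x _ => by rw [pair_delta, cartan_symm]

theorem QF_sub_left (v v' w : B →₀ ℤ) : QF M (v - v') w = QF M v w - QF M v' w := by
  unfold QF
  rw [Finsupp.sum_sub_index (fun j b₁ b₂ => by ring)]

theorem QF_smul_left (c : ℤ) (v w : B →₀ ℤ) : QF M (c • v) w = c * QF M v w := by
  unfold QF
  rw [Finsupp.sum_smul_index' (fun j => by ring), Finsupp.mul_sum]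
  exact Finsupp.sum_congr fun x _ => by rw [smul_eq_mul]; ring

theorem QF_sub_right (v w w' : B →₀ ℤ) : QF M v (w - w') = QF M v w - QF M v w' := by
  unfold QF
  rw [← Finsupp.sum_sub]
  exact Finsupp.sum_congr fun x _ => by rw [map_sub]; ring

theorem QF_smul_right (c : ℤ) (v w : B →₀ ℤ) : QF M v (c • w) = c * QF M v w := by
  unfold QF
  rw [Finsupp.mul_sum]
  exact Finsupp.sum_congr fun x _ => by rw [map_zsmul, smul_eq_mul]; ring

theorem QF_sigma (i : B) (v w : B →₀ ℤ) : QF M (sigma M i v) (sigma M i w) = QF M v w := by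
  simp only [sigma_apply, QF_sub_left, QF_sub_right, QF_smul_left, QF_smul_right,
    QF_delta_left, QF_delta_right, pair_delta, cartan_diag, map_sub, map_zsmul, smul_eq_mul]
  ring

theorem QF_phi (u : W) : ∀ v w : B →₀ ℤ,
    QF M (phi cs hsl u v) (phi cs hsl u w) = QF M v w := by
  induction u using cs.simple_induction with
  | simple i => intro v w; rw [phi_simple]; exact QF_sigma i v w
  | one => intro v w; simp
  | mul u₁ u₂ h₁ h₂ =>
    intro v w
    rw [map_mul]
    show QF M ((phi cs hsl u₁) ((phi cs hsl u₂) v)) ((phi cs hsl u₁) ((phi cs hsl u₂) w)) = _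
    rw [h₁, h₂]

theorem phi_mul_apply (u₁ u₂ : W) (v : B →₀ ℤ) :
    phi cs hsl (u₁ * u₂) v = phi cs hsl u₁ (phi cs hsl u₂ v) := by
  rw [map_mul]; rfl

theorem coroot_sign {u v : W} {i j : B} (h : u * s i * u⁻¹ = v * s j * v⁻¹) :
    phi cs hsl u (delta i) = phi cs hsl v (delta j) ∨
    phi cs hsl u (delta i) = - phi cs hsl v (delta j) := by
  set x := v⁻¹ * u with hx
  set γ := phi cs hsl x (delta i) with hγ
  have hrel : s j * x = x * s i := by
    calc s j * (v⁻¹ * u) = v⁻¹ * (v * s j * v⁻¹) * u := by group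
    _ = v⁻¹ * (u * s i * u⁻¹) * u := by rw [h]
    _ = (v⁻¹ * u) * s i := by group
  have hneg : phi cs hsl (s j) γ = - γ := by
    rw [hγ, ← phi_mul_apply, hrel, phi_mul_apply]
    have hd : phi cs hsl (s i) (delta i) = - delta i := by
      rw [phi_simple_apply, pair_delta, cartan_diag]
      module
    rw [hd, map_neg]
  have h' : γ - pair M j γ • delta j = - γ :=
    (phi_simple_apply cs hsl j γ).symm.trans hneg
  have h2 : (2 : ℤ) • γ = pair M j γ • delta j := by
    rw [sub_eq_iff_eq_add] at h'
    rw [two_smul]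
    nth_rewrite 1 [h']
    abel
  have hcoord : ∀ k, k ≠ j → γ k = 0 := by
    intro k hk
    have hk2 := congrArg (fun f : B →₀ ℤ => f k) h2
    simp only [Finsupp.smul_apply, delta, Finsupp.single_apply, if_neg (Ne.symm hk),
      smul_eq_mul, mul_zero] at hk2
    omega
  have hform : γ = γ j • delta j := by
    ext k
    rcases em (k = j) with rfl | hk
    · simp [delta, Finsupp.smul_apply, Finsupp.single_eq_same]
    · rw [hcoord k hk]
      simp [delta, Finsupp.single_eq_of_ne hk]
  have hQ2 : QF M γ γ = 2 := by
    rw [hγ, QF_phi, QF_delta_left, pair_delta, cartan_diag]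
  rw [hform] at hQ2
  rw [QF_smul_left, QF_smul_right, QF_delta_left, pair_delta, cartan_diag] at hQ2
  have hc2 : 2 * (γ j * γ j) = 2 * 1 := by linear_combination hQ2
  have hc : γ j * γ j = 1 := mul_left_cancel₀ two_ne_zero hc2
  have hu : u = v * x := by rw [hx]; group
  rcases mul_self_eq_one_iff.mp hc with h1 | h1
  · left
    rw [hu, phi_mul_apply, ← hγ, hform, h1, one_smul]
  · right
    rw [hu, phi_mul_apply, ← hγ, hform, h1]
    rw [neg_smul, one_smul, map_neg]

section WordSide

variable (l : List B) (dflt : B)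

/-- The weight function built from Stembridge's condition (i). -/
def lamF (M : CoxeterMatrix B) (l : List B) (dflt : B) : B → ℤ := fun i =>
  1 + ∑ t ∈ Finset.Ico
      ((Nat.findGreatest (fun k => l.getD k dflt = i) (l.length - 1)) + 1) l.length,
    cartan M (l.getD t dflt) i

/-- The weight functional. -/
def lamHat (M : CoxeterMatrix B) (l : List B) (dflt : B) : (B →₀ ℤ) →+ ℤ where
  toFun v := v.sum fun j c => c * lamF M l dflt j
  map_zero' := by simp
  map_add' v w := by
    exact Finsupp.sum_add_index' (fun j => by ring) (fun j b₁ b₂ => by ring)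

theorem lamHat_apply (v : B →₀ ℤ) :
    lamHat M l dflt v = v.sum fun j c => c * lamF M l dflt j := rfl

theorem lamHat_delta (j : B) : lamHat M l dflt (delta j) = lamF M l dflt j := by
  rw [delta, lamHat_apply, Finsupp.sum_single_index]
  · ring
  · ring

/-- Reformulation of Stembridge's condition (i). -/
def CondH1 (M : CoxeterMatrix B) (l : List B) (dflt : B) : Prop :=
  ∀ a b : ℕ, a < b → b < l.length → l.getD b dflt = l.getD a dflt →
    (∀ t, a < t → t < b → l.getD t dflt ≠ l.getD a dflt) →
    ∑ t ∈ Finset.Ioo a b, cartan M (l.getD t dflt) (l.getD a dflt) = -2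

theorem lam_eq (H1 : CondH1 M l dflt) :
    ∀ k, k < l.length →
      lamF M l dflt (l.getD k dflt)
        = 1 + ∑ t ∈ Finset.Ico (k+1) l.length,
            cartan M (l.getD t dflt) (l.getD k dflt) := by
  suffices H : ∀ n k, k < l.length → l.length - k ≤ n →
      lamF M l dflt (l.getD k dflt)
        = 1 + ∑ t ∈ Finset.Ico (k+1) l.length,
            cartan M (l.getD t dflt) (l.getD k dflt) by
    intro k hk
    exact H l.length k hk (by omega)
  intro n
  induction n with
  | zero => intro k hk h0; omega
  | succ n ih =>
    intro k hk hn
    by_cases hocc : ∃ t, (k < t ∧ t < l.length) ∧ l.getD t dflt = l.getD k dflt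
    · set k' := Nat.find hocc with hk'def
      obtain ⟨⟨hk1, hk2⟩, hk3⟩ := Nat.find_spec hocc
      have hmin : ∀ t, k < t → t < k' → l.getD t dflt ≠ l.getD k dflt := by
        intro t ht1 ht2 hne
        exact (Nat.find_min hocc ht2) ⟨⟨ht1, by omega⟩, hne⟩
      have hIH := ih k' hk2 (by omega)
      rw [hk3] at hIH
      rw [hIH]
      congr 1
      rw [← Finset.sum_Ico_consecutive (fun t => cartan M (l.getD t dflt) (l.getD k dflt))
        (show k+1 ≤ k'+1 by omega) (show k'+1 ≤ l.length by omega)]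
      have hmid : ∑ t ∈ Finset.Ico (k+1) (k'+1),
          cartan M (l.getD t dflt) (l.getD k dflt) = 0 := by
        rw [Finset.sum_Ico_succ_top (by omega), Finset.Ico_add_one_left_eq_Ioo,
          H1 k k' hk1 hk2 hk3 hmin, hk3, cartan_diag]
        ring
      rw [hmid, zero_add]
    · have hK : Nat.findGreatest (fun t => l.getD t dflt = l.getD k dflt) (l.length - 1)
          = k := by
        rw [Nat.findGreatest_eq_iff]
        exact ⟨by omega, fun _ => rfl, fun t ht1 ht2 hPt => hocc ⟨t, ⟨ht1, by omega⟩, hPt⟩⟩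
      show 1 + _ = _
      rw [hK]

variable (hsl : ∀ i j : B, i ≠ j → M i j = 2 ∨ M i j = 3)

theorem lamHat_phi_drop (H1 : CondH1 M l dflt) :
    ∀ n k, k ≤ l.length → l.length - k ≤ n → ∀ jj : B,
      lamHat M l dflt (phi cs hsl ((π (l.drop k))⁻¹) (delta jj))
        = lamF M l dflt jj - ∑ t ∈ Finset.Ico k l.length, cartan M (l.getD t dflt) jj := by
  intro n
  induction n with
  | zero =>
    intro k hk hn jj
    have hkl : k = l.length := by omega
    subst hkl
    rw [List.drop_length, cs.wordProd_nil, inv_one, map_one]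
    show lamHat M l dflt (delta jj) = _
    rw [lamHat_delta, Finset.Ico_self, Finset.sum_empty]
    ring
  | succ n ih =>
    intro k hk hn jj
    rcases em (k = l.length) with rfl | hne
    · rw [List.drop_length, cs.wordProd_nil, inv_one, map_one]
      show lamHat M l dflt (delta jj) = _
      rw [lamHat_delta, Finset.Ico_self, Finset.sum_empty]
      ring
    · have hklen : k < l.length := by omega
      have hdrop : l.drop k = l.getD k dflt :: l.drop (k+1) := by
        rw [List.drop_eq_getElem_cons hklen, List.getD_eq_getElem l dflt hklen]
      rw [hdrop, cs.wordProd_cons, mul_inv_rev, cs.inv_simple, phi_mul_apply,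
        phi_simple_apply, pair_delta, map_sub, map_zsmul, map_sub, map_zsmul,
        ih (k+1) (by omega) (by omega) jj, ih (k+1) (by omega) (by omega) (l.getD k dflt),
        smul_eq_mul]
      have hbr : lamF M l dflt (l.getD k dflt)
          - ∑ t ∈ Finset.Ico (k+1) l.length, cartan M (l.getD t dflt) (l.getD k dflt)
          = 1 := by
        rw [lam_eq l dflt H1 k hklen]
        ring
      rw [hbr, Finset.sum_eq_sum_Ico_succ_bot hklen, cartan_symm]
      ring

theorem lamHat_ris_eq_one (H1 : CondH1 M l dflt) (k : ℕ) (hk : k < l.length) :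
    lamHat M l dflt (phi cs hsl ((π (l.drop (k+1)))⁻¹) (delta (l.getD k dflt))) = 1 := by
  rw [lamHat_phi_drop cs l dflt hsl H1 l.length (k+1) (by omega) (by omega) (l.getD k dflt)]
  rw [lam_eq l dflt H1 k hk]
  ring

theorem pairing_pm (H1 : CondH1 M l dflt) {t : W} (ht : t ∈ ris l) {u : W} {ii : B}
    (hexp : t = u * s ii * u⁻¹) :
    lamHat M l dflt (phi cs hsl u (delta ii)) = 1
      ∨ lamHat M l dflt (phi cs hsl u (delta ii)) = -1 := by
  obtain ⟨n, hn, hval⟩ := List.getElem_of_mem ht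
  have hlen : n < l.length := by
    have := cs.length_rightInvSeq l
    omega
  have hgd : (ris l).getD n 1 = t := by
    rw [List.getD_eq_getElem _ _ hn, hval]
  rw [cs.getD_rightInvSeq] at hgd
  have hsome : l[n]? = some (l.getD n dflt) := by
    rw [List.getElem?_eq_getElem hlen,
      List.getD_eq_getElem l dflt hlen]
  rw [hsome] at hgd
  simp only [Option.map_some, Option.getD_some] at hgd
  have hexp' : u * s ii * u⁻¹
      = (π (l.drop (n+1)))⁻¹ * s (l.getD n dflt) * ((π (l.drop (n+1)))⁻¹)⁻¹ := by
    rw [inv_inv, hgd, ← hexp]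
  rcases coroot_sign cs hsl hexp' with hs | hs
  · rw [hs]
    left
    exact lamHat_ris_eq_one cs l dflt hsl H1 n hlen
  · rw [hs, map_neg]
    right
    rw [lamHat_ris_eq_one cs l dflt hsl H1 n hlen]

end WordSide

end

end StembAux

open StembAux in
/-- Stembridge's criterion: in a simply-laced Coxeter group, if a reduced expression
`w = s_{i_1} ⋯ s_{i_d}` has the property that between every pair of consecutive
occurrences of a generator `s_i` there are exactly two letters not commuting with `s_i`,
and after the last occurrence of each generator `s_i` there is at most one letter not
commuting with `s_i`, then `w` is fully commutative: no reduced word for `w` contains a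
braid factor `[i, j, i]` with `s_i s_j ≠ s_j s_i` (i.e. `M i j = 3`). -/
theorem fully_commutative_of_stembridge_conditions {B W : Type*} [Group W]
    (M : CoxeterMatrix B) (cs : CoxeterSystem M W)
    (hsl : ∀ i j : B, i ≠ j → M i j = 2 ∨ M i j = 3)
    (w : W) (l : List B) (hred : cs.IsReduced l) (hw : cs.wordProd l = w)
    (h1 : ∀ a b : ℕ, ∀ i : B, a < b → b < l.length →
      l.getD a i = i → l.getD b i = i →
      (∀ c, a < c → c < b → l.getD c i ≠ i) →
      ((Finset.Ioo a b).filter (fun t => M i (l.getD t i) = 3)).card = 2)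
    (h2 : ∀ a : ℕ, ∀ i : B, a < l.length → l.getD a i = i →
      (∀ c, a < c → c < l.length → l.getD c i ≠ i) →
      ((Finset.Ioo a l.length).filter (fun t => M i (l.getD t i) = 3)).card ≤ 1) :
    ∀ l' : List B, cs.IsReduced l' → cs.wordProd l' = w →
      ∀ i j : B, M i j = 3 → ¬ ([i, j, i] <:+: l') := by
  classical
  intro l' hred' hw' i j hM3 hinf
  obtain ⟨p, q, hpq⟩ := hinf
  have hππ : cs.wordProd l = cs.wordProd l' := by rw [hw, hw']
  have hne : i ≠ j := by
    intro h
    rw [h, M.diagonal] at hM3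
    omega
  -- Stembridge condition (i) in Cartan-sum form
  have H1 : CondH1 M l i := by
    intro a b hab hb heq hmid
    have hal : a < l.length := by omega
    have hiia : l.getD a i = l[a] := List.getD_eq_getElem l i hal
    set ii := l.getD a i with hii
    have hgda : l.getD a ii = ii := by
      rw [List.getD_eq_getElem l ii hal, ← hiia]
    have hgdb : l.getD b ii = ii := by
      rw [List.getD_eq_getElem l ii hb, ← List.getD_eq_getElem l i hb, heq]
    have hmid' : ∀ c, a < c → c < b → l.getD c ii ≠ ii := by
      intro c hc1 hc2 hcon
      refine hmid c hc1 hc2 ?_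
      rw [List.getD_eq_getElem l i (by omega), ← List.getD_eq_getElem l ii (by omega), hcon]
    have hcard := h1 a b ii hab hb hgda hgdb hmid'
    calc ∑ t ∈ Finset.Ioo a b, cartan M (l.getD t i) (l.getD a i)
        = ∑ t ∈ Finset.Ioo a b, (if M ii (l.getD t ii) = 3 then (-1 : ℤ) else 0) := by
          refine Finset.sum_congr rfl fun t htm => ?_
          rw [Finset.mem_Ioo] at htm
          have htl : t < l.length := by omega
          have h1t : l.getD t i = l.getD t ii := by
            rw [List.getD_eq_getElem l i htl, List.getD_eq_getElem l ii htl]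
          have hnee : ii ≠ l.getD t ii := by
            intro hcon
            exact hmid' t htm.1 htm.2 hcon.symm
          rw [h1t, ← hii, cartan_symm]
          unfold cartan
          rw [if_neg hnee]
      _ = ∑ t ∈ (Finset.Ioo a b).filter (fun t => M ii (l.getD t ii) = 3), (-1 : ℤ) :=
          (Finset.sum_filter _ _).symm
      _ = ((Finset.Ioo a b).filter (fun t => M ii (l.getD t ii) = 3)).card • (-1 : ℤ) :=
          Finset.sum_const _
      _ = -2 := by
          rw [Finset.filter_congr_decidable] at hcard
          rw [hcard]
          simp
  -- braid relation consequences
  have h6 : (cs.simple i * cs.simple j) ^ 3 = 1 := by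
    rw [← hM3]
    exact cs.simple_mul_simple_pow i j
  have h6' : ((cs.simple i * cs.simple j) * (cs.simple i * cs.simple j))
      * (cs.simple i * cs.simple j) = 1 := by
    rw [← h6, pow_succ, pow_succ, pow_one]
  have h7 : (cs.simple i * cs.simple j * cs.simple i * cs.simple j * cs.simple i)
      * cs.simple j = 1 := by
    calc (cs.simple i * cs.simple j * cs.simple i * cs.simple j * cs.simple i) * cs.simple j
        = ((cs.simple i * cs.simple j) * (cs.simple i * cs.simple j))
          * (cs.simple i * cs.simple j) := by simp only [mul_assoc]
      _ = 1 := h6'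
  have hbraid : cs.simple i * cs.simple j * cs.simple i * cs.simple j * cs.simple i
      = cs.simple j := by
    have h8 := mul_eq_one_iff_eq_inv.mp h7
    rwa [cs.inv_simple] at h8
  set v := cs.wordProd q with hv
  have hl' : l' = p ++ ([i,j,i] ++ q) := by rw [← hpq]; simp
  have hlen' : l'.length = p.length + (3 + q.length) := by
    rw [hl']
    simp only [List.length_append, List.length_cons, List.length_nil]
    try omega
  -- drops and letters
  have hd1 : l'.drop (p.length + 1) = [j, i] ++ q := by
    rw [hl', List.drop_length_add_append 1]
    rfl
  have hd2 : l'.drop (p.length + 2) = [i] ++ q := by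
    rw [hl', List.drop_length_add_append 2]
    rfl
  have hd3 : l'.drop (p.length + 3) = q := by
    rw [hl', List.drop_length_add_append 3]
    rfl
  have hg1 : l'[p.length]? = some i := by
    rw [hl', List.getElem?_append_right (le_refl p.length)]
    simp
  have hg2 : l'[(p.length + 1)]? = some j := by
    rw [hl', List.getElem?_append_right (by omega)]
    have : p.length + 1 - p.length = 1 := by omega
    rw [this]
    rfl
  have hg3 : l'[(p.length + 2)]? = some i := by
    rw [hl', List.getElem?_append_right (by omega)]
    have : p.length + 2 - p.length = 2 := by omega
    rw [this]
    rfl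
  -- the three inversions
  have hπ1 : cs.wordProd ([j, i] ++ q) = cs.simple j * (cs.simple i * v) := by
    rw [cs.wordProd_append, cs.wordProd_cons, cs.wordProd_singleton, hv, mul_assoc]
  have hπ2 : cs.wordProd ([i] ++ q) = cs.simple i * v := by
    rw [cs.wordProd_append, hv, cs.wordProd_singleton]
  have ht1 : (cs.rightInvSeq l').getD p.length 1 = v⁻¹ * cs.simple j * v := by
    rw [cs.getD_rightInvSeq, hg1]
    have : p.length + 1 = p.length + 1 := rfl
    rw [hd1]
    simp only [Option.map_some, Option.getD_some]
    rw [hπ1]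
    have hinv : (cs.simple j * (cs.simple i * v))⁻¹ = v⁻¹ * (cs.simple i * cs.simple j) := by
      rw [mul_inv_rev, mul_inv_rev, cs.inv_simple, cs.inv_simple]
      simp only [mul_assoc]
    rw [hinv]
    calc v⁻¹ * (cs.simple i * cs.simple j) * cs.simple i * (cs.simple j * (cs.simple i * v))
        = v⁻¹ * (cs.simple i * cs.simple j * cs.simple i * cs.simple j * cs.simple i) * v := by
          simp only [mul_assoc]
      _ = v⁻¹ * cs.simple j * v := by rw [hbraid]
  have ht2 : (cs.rightInvSeq l').getD (p.length + 1) 1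
      = v⁻¹ * (cs.simple i * cs.simple j * cs.simple i) * v := by
    rw [cs.getD_rightInvSeq, hg2]
    have : p.length + 1 + 1 = p.length + 2 := by omega
    rw [this, hd2]
    simp only [Option.map_some, Option.getD_some]
    rw [hπ2, mul_inv_rev, cs.inv_simple]
    simp only [mul_assoc]
  have ht3 : (cs.rightInvSeq l').getD (p.length + 2) 1 = v⁻¹ * cs.simple i * v := by
    rw [cs.getD_rightInvSeq, hg3]
    have : p.length + 2 + 1 = p.length + 3 := by omega
    rw [this, hd3]
    simp only [Option.map_some, Option.getD_some]
    rfl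
  -- memberships
  have hrislen : (cs.rightInvSeq l').length = l'.length := cs.length_rightInvSeq l'
  have hmem : ∀ k, k < l'.length →
      (cs.rightInvSeq l').getD k 1 ∈ cs.rightInvSeq l' := by
    intro k hk
    rw [List.getD_eq_getElem _ _ (by omega)]
    exact List.getElem_mem _
  have hmem1 : v⁻¹ * cs.simple j * v ∈ cs.rightInvSeq l := by
    refine mem_ris_of_eq_wordProd cs hred' hππ ?_
    rw [← ht1]
    exact hmem p.length (by omega)
  have hmem2 : v⁻¹ * (cs.simple i * cs.simple j * cs.simple i) * v ∈ cs.rightInvSeq l := by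
    refine mem_ris_of_eq_wordProd cs hred' hππ ?_
    rw [← ht2]
    exact hmem (p.length + 1) (by omega)
  have hmem3 : v⁻¹ * cs.simple i * v ∈ cs.rightInvSeq l := by
    refine mem_ris_of_eq_wordProd cs hred' hππ ?_
    rw [← ht3]
    exact hmem (p.length + 2) (by omega)
  -- pairings
  have hexp1 : v⁻¹ * cs.simple j * v = v⁻¹ * cs.simple j * (v⁻¹)⁻¹ := by rw [inv_inv]
  have hexp3 : v⁻¹ * cs.simple i * v = v⁻¹ * cs.simple i * (v⁻¹)⁻¹ := by rw [inv_inv]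
  have hexp2 : v⁻¹ * (cs.simple i * cs.simple j * cs.simple i) * v
      = (v⁻¹ * cs.simple i) * cs.simple j * (v⁻¹ * cs.simple i)⁻¹ := by
    rw [mul_inv_rev, cs.inv_simple, inv_inv]
    simp only [mul_assoc]
  have hA1 := pairing_pm cs l i hsl H1 hmem3 hexp3
  have hA2 := pairing_pm cs l i hsl H1 hmem1 hexp1
  have hA3 := pairing_pm cs l i hsl H1 hmem2 hexp2
  -- the coroot sum relation
  have hsum : phi cs hsl (v⁻¹ * cs.simple i) (delta j)
      = phi cs hsl (v⁻¹) (delta j) + phi cs hsl (v⁻¹) (delta i) := by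
    rw [phi_mul_apply, phi_simple_apply, pair_delta, cartan_of_three M hne hM3]
    rw [show delta j - (-1 : ℤ) • StembAux.delta i = delta j + delta i by module, map_add]
  have hval := congrArg (lamHat M l i) hsum
  rw [map_add] at hval
  rcases hA1 with h1' | h1' <;> rcases hA2 with h2' | h2' <;> rcases hA3 with h3' | h3' <;>
    rw [h1', h2', h3'] at hval <;> omega
end
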